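/- Let σ be the k-simplex τ_k of a simplicial complex and consider D(τ̂₀…τ̂ₖ, Sd τ_k), the closed dual cell in the barycentric subdivision of τ_k of the simplex τ̂₀…τ̂ₖ (for a chain τ₀ < … < τ_k of faces). Then the open dual cell D̊(τ̂₀…τ̂ₖ, Sd τ_k) is PL-homeomorphic to the open simplex Δ̊^{|τ_k|−k} of dimension |τ_k| − k. -/

import Mathlib

attribute [local instance] Classical.propDecidable

/-- The barycenter of a face `s` of the standard `m`-simplex (spanned by the standard
basis vectors of ℝ^{m+1}). -/
noncomputable def faceBar (m : ℕ) (s : Finset (Fin (m + 1))) : Fin (m + 1) → ℝ :=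
  Finset.centroid ℝ s (fun i => (fun j => if j = i then (1 : ℝ) else 0))

/-- The barycenter of a simplex of the barycentric subdivision `Sd Δᵐ`
(given as a chain `c` of faces). -/
noncomputable def chainBar (m : ℕ) (c : Finset (Finset (Fin (m + 1)))) : Fin (m + 1) → ℝ :=
  Finset.centroid ℝ c (faceBar m)

/-- The open simplex spanned by a finite set of points: all strictly positive affine
combinations. -/
def openHullOf (m : ℕ) (t : Finset (Fin (m + 1) → ℝ)) : Set (Fin (m + 1) → ℝ) :=
  {x | ∃ w : (Fin (m + 1) → ℝ) → ℝ, (∀ p ∈ t, 0 < w p) ∧ (∑ p ∈ t, w p) = 1 ∧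
    (∑ p ∈ t, w p • p) = x}

/-- A simplex of the barycentric subdivision `Sd Δᵐ`: a nonempty chain of nonempty
faces. -/
def isSdSimplex (m : ℕ) (c : Finset (Finset (Fin (m + 1)))) : Prop :=
  c.Nonempty ∧ (∀ s ∈ c, s.Nonempty) ∧
    IsChain (· ⊆ ·) (↑c : Set (Finset (Fin (m + 1))))

/-- The open dual cell `D̊(ρ, Sd Δᵐ)` of a simplex `ρ` of `Sd Δᵐ`, realized in ℝ^{m+1}:
the union of the open simplices of `Sd(Sd Δᵐ)` spanned by barycenters of chains of
simplices of `Sd Δᵐ` with least element `ρ`. -/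
noncomputable def openDualCell (m : ℕ) (ρ : Finset (Finset (Fin (m + 1)))) :
    Set (Fin (m + 1) → ℝ) :=
  ⋃ (Cc : Finset (Finset (Finset (Fin (m + 1)))))
    (_ : Cc.Nonempty ∧ (∀ c ∈ Cc, isSdSimplex m c) ∧
      IsChain (· ⊆ ·) (↑Cc : Set (Finset (Finset (Fin (m + 1))))) ∧
      ρ ∈ Cc ∧ ∀ c ∈ Cc, ρ ⊆ c),
    openHullOf m (Cc.image (chainBar m))

/-- The open standard `l`-simplex. -/
def openStdSimplex (l : ℕ) : Set (Fin (l + 1) → ℝ) :=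
  {x | (∀ i, 0 < x i) ∧ ∑ i, x i = 1}


set_option linter.unusedSectionVars false
set_option linter.unusedVariables false
set_option maxHeartbeats 1000000

open Finset

section Generic

variable {ι : Type*} [Fintype ι] [DecidableEq ι]

/-- max of `p` over `t`, with default `0`. -/
noncomputable def maxd (p : ι → ℝ) (t : Finset ι) : ℝ := t.fold max 0 p

/-- extraction of barycentric-subdivision coordinates from a point. -/
noncomputable def extr (p : ι → ℝ) (s : Finset ι) : ℝ :=
  if h : s.Nonempty then max 0 (s.inf' h p - maxd p sᶜ) else 0

/-- realization of subdivision coordinates as a point. -/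
noncomputable def realize (h : Finset ι → ℝ) : ι → ℝ := fun i => ∑ s, if i ∈ s then h s else 0

lemma maxd_nonneg (p : ι → ℝ) (t : Finset ι) : 0 ≤ maxd p t :=
  (Finset.le_fold_max _).2 (Or.inl le_rfl)

lemma le_maxd (p : ι → ℝ) {t : Finset ι} {i : ι} (hi : i ∈ t) : p i ≤ maxd p t :=
  (Finset.le_fold_max _).2 (Or.inr ⟨i, hi, le_rfl⟩)

lemma maxd_le {p : ι → ℝ} {t : Finset ι} {c : ℝ} (h0 : 0 ≤ c) (h : ∀ i ∈ t, p i ≤ c) :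
    maxd p t ≤ c := (Finset.fold_max_le _).2 ⟨h0, h⟩

lemma maxd_congr {p q : ι → ℝ} {t : Finset ι} (h : ∀ i ∈ t, p i = q i) :
    maxd p t = maxd q t := Finset.fold_congr h

lemma maxd_exists {p : ι → ℝ} (h0 : ∀ i, 0 ≤ p i) {t : Finset ι} (ht : t.Nonempty) :
    ∃ i ∈ t, maxd p t = p i := by
  have h1 : maxd p t = t.sup' ht p := by
    apply le_antisymm
    · refine maxd_le ?_ (fun i hi => Finset.le_sup' p hi)
      obtain ⟨i, hi⟩ := ht
      exact le_trans (h0 i) (Finset.le_sup' p hi)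
    · exact Finset.sup'_le ht p (fun i hi => le_maxd p hi)
  obtain ⟨i, hi, he⟩ := Finset.exists_mem_eq_sup' ht p
  exact ⟨i, hi, by rw [h1, he]⟩

lemma extr_nonneg (p : ι → ℝ) (s : Finset ι) : 0 ≤ extr p s := by
  unfold extr; split
  · exact le_max_left _ _
  · exact le_rfl

lemma extr_empty (p : ι → ℝ) : extr p ∅ = 0 := by simp [extr]

lemma extr_ne {p : ι → ℝ} {s : Finset ι} (h : extr p s ≠ 0) :
    ∃ hs : s.Nonempty, maxd p sᶜ < s.inf' hs p := by
  unfold extr at h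
  split at h
  · rename_i hs
    refine ⟨hs, ?_⟩
    by_contra hle
    push_neg at hle
    exact h (max_eq_left (by linarith))
  · exact absurd rfl h

lemma extr_of_lt {p : ι → ℝ} {s : Finset ι} (hs : s.Nonempty)
    (hlt : maxd p sᶜ < s.inf' hs p) : extr p s = s.inf' hs p - maxd p sᶜ := by
  rw [extr, dif_pos hs]
  exact max_eq_right (by linarith)

lemma extr_of_le {p : ι → ℝ} {s : Finset ι} (hs : s.Nonempty)
    (hle : s.inf' hs p ≤ maxd p sᶜ) : extr p s = 0 := by
  rw [extr, dif_pos hs]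
  exact max_eq_left (by linarith)

/-- L1 : the support of the extracted coordinates is a chain. -/
lemma extr_support_chain (p : ι → ℝ) :
    IsChain (· ⊆ ·) {s : Finset ι | extr p s ≠ 0} := by
  intro s hs s' hs' _
  by_contra hcon
  push_neg at hcon
  obtain ⟨h1, h2⟩ := hcon
  obtain ⟨hsne, hlt⟩ := extr_ne hs
  obtain ⟨hsne', hlt'⟩ := extr_ne hs'
  obtain ⟨a, has, has'⟩ := Finset.not_subset.1 h1
  obtain ⟨a', ha's', ha's⟩ := Finset.not_subset.1 h2
  have e1 : p a' ≤ maxd p sᶜ := le_maxd p (Finset.mem_compl.2 ha's)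
  have e2 : s.inf' hsne p ≤ p a := Finset.inf'_le p has
  have e3 : p a ≤ maxd p s'ᶜ := le_maxd p (Finset.mem_compl.2 has')
  have e4 : s'.inf' hsne' p ≤ p a' := Finset.inf'_le p ha's'
  linarith

section Hlemmas

variable {h : Finset ι → ℝ} (hh : ∀ s, 0 ≤ h s)
  (hc : IsChain (· ⊆ ·) {s : Finset ι | h s ≠ 0})

include hh hc

/-- H1 : min of a realization over a face. -/
lemma inf'_realize {s : Finset ι} (hs : s.Nonempty) :
    s.inf' hs (realize h) = ∑ s' ∈ univ.filter (fun s' => s ⊆ s'), h s' := by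
  classical
  -- find `i₀ ∈ s` avoiding all support elements not containing `s`
  have key : ∃ i₀ ∈ s, ∀ s' : Finset ι, h s' ≠ 0 → i₀ ∈ s' → s ⊆ s' := by
    set V : Finset (Finset ι) := univ.filter (fun s' => h s' ≠ 0 ∧ ¬ s ⊆ s') with hV
    by_cases hVne : V.Nonempty
    · obtain ⟨v, hvmem, hvmax⟩ := V.exists_maximal hVne
      have hvprop := (Finset.mem_filter.1 hvmem).2
      have hmax : ∀ u ∈ V, u ⊆ v := by
        intro u hu
        rcases eq_or_ne u v with rfl | hne
        · exact subset_rfl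
        · have hup := (Finset.mem_filter.1 hu).2
          rcases hc (show u ∈ {s | h s ≠ 0} from hup.1) (show v ∈ {s | h s ≠ 0} from hvprop.1) hne with h' | h'
          · exact h'
          · exact hvmax hu h'
      obtain ⟨i₀, hi₀s, hi₀v⟩ := Finset.not_subset.1 hvprop.2
      refine ⟨i₀, hi₀s, fun s' hs' hmem => ?_⟩
      by_contra hns
      have : s' ∈ V := Finset.mem_filter.2 ⟨Finset.mem_univ _, hs', hns⟩
      exact hi₀v ((hmax s' this) hmem)
    · obtain ⟨i₀, hi₀⟩ := hs
      refine ⟨i₀, hi₀, fun s' hs' _ => ?_⟩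
      by_contra hns
      exact hVne ⟨s', Finset.mem_filter.2 ⟨Finset.mem_univ _, hs', hns⟩⟩
  obtain ⟨i₀, hi₀s, hi₀⟩ := key
  apply le_antisymm
  · calc s.inf' hs (realize h) ≤ realize h i₀ := Finset.inf'_le _ hi₀s
      _ = ∑ s' ∈ univ.filter (fun s' => s ⊆ s'), h s' := by
          unfold realize
          rw [← Finset.sum_filter]
          rw [← Finset.sum_filter_of_ne (s := univ.filter (fun s' => i₀ ∈ s'))
            (p := fun s' => h s' ≠ 0) (fun x _ hx => hx)]
          rw [← Finset.sum_filter_of_ne (s := univ.filter (fun s' => s ⊆ s'))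
            (p := fun s' => h s' ≠ 0) (fun x _ hx => hx)]
          apply Finset.sum_congr _ (fun _ _ => rfl)
          ext s'
          simp only [Finset.mem_filter, Finset.mem_univ, true_and]
          constructor
          · rintro ⟨hmem, hne⟩; exact ⟨hi₀ s' hne hmem, hne⟩
          · rintro ⟨hsub, hne⟩; exact ⟨hsub hi₀s, hne⟩
  · apply Finset.le_inf'
    intro i hi
    unfold realize
    rw [← Finset.sum_filter]
    apply Finset.sum_le_sum_of_subset_of_nonneg
    · intro s' hs'
      simp only [Finset.mem_filter, Finset.mem_univ, true_and] at hs' ⊢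
      exact hs' hi
    · exact fun s' _ _ => hh s'

/-- H2 : default-max of a realization over the complement of a face. -/
lemma maxd_realize (s : Finset ι) :
    maxd (realize h) sᶜ = ∑ s' ∈ univ.filter (fun s' => ¬ s' ⊆ s), h s' := by
  classical
  apply le_antisymm
  · apply maxd_le (Finset.sum_nonneg (fun s' _ => hh s'))
    intro i hi
    have his : i ∉ s := Finset.mem_compl.1 hi
    unfold realize
    rw [← Finset.sum_filter]
    apply Finset.sum_le_sum_of_subset_of_nonneg
    · intro s' hs'
      simp only [Finset.mem_filter, Finset.mem_univ, true_and] at hs' ⊢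
      intro hsub
      exact his (hsub hs')
    · exact fun s' _ _ => hh s'
  · set W : Finset (Finset ι) := univ.filter (fun s' => h s' ≠ 0 ∧ ¬ s' ⊆ s) with hW
    by_cases hWne : W.Nonempty
    · obtain ⟨w, hwmem, hwmin⟩ := W.exists_minimal hWne
      have hwprop := (Finset.mem_filter.1 hwmem).2
      have hmin : ∀ u ∈ W, w ⊆ u := by
        intro u hu
        rcases eq_or_ne u w with rfl | hne
        · exact subset_rfl
        · have hup := (Finset.mem_filter.1 hu).2
          rcases hc (show u ∈ {s | h s ≠ 0} from hup.1) (show w ∈ {s | h s ≠ 0} from hwprop.1) hne with h' | h'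
          · exact hwmin hu h'
          · exact h'
      obtain ⟨i₀, hi₀w, hi₀s⟩ := Finset.not_subset.1 hwprop.2
      have heq : realize h i₀ = ∑ s' ∈ univ.filter (fun s' => ¬ s' ⊆ s), h s' := by
        unfold realize
        rw [← Finset.sum_filter]
        rw [← Finset.sum_filter_of_ne (s := univ.filter (fun s' => i₀ ∈ s'))
          (p := fun s' => h s' ≠ 0) (fun x _ hx => hx)]
        rw [← Finset.sum_filter_of_ne (s := univ.filter (fun s' => ¬ s' ⊆ s))
          (p := fun s' => h s' ≠ 0) (fun x _ hx => hx)]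
        apply Finset.sum_congr _ (fun _ _ => rfl)
        ext s'
        simp only [Finset.mem_filter, Finset.mem_univ, true_and]
        constructor
        · rintro ⟨hmem, hne⟩
          exact ⟨fun hsub => hi₀s (hsub hmem), hne⟩
        · rintro ⟨hnsub, hne⟩
          have : s' ∈ W := Finset.mem_filter.2 ⟨Finset.mem_univ _, hne, hnsub⟩
          exact ⟨hmin s' this hi₀w, hne⟩
      rw [← heq]
      exact le_maxd _ (Finset.mem_compl.2 hi₀s)
    · have : ∑ s' ∈ univ.filter (fun s' => ¬ s' ⊆ s), h s' = 0 := by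
        apply Finset.sum_eq_zero
        intro s' hs'
        by_contra hne
        exact hWne ⟨s', Finset.mem_filter.2 ⟨Finset.mem_univ _,
          hne, (Finset.mem_filter.1 hs').2⟩⟩
      rw [this]
      exact maxd_nonneg _ _

/-- L3 : extraction inverts realization for chain-supported nonnegative coordinates. -/
lemma extr_realize {s : Finset ι} (hs : s.Nonempty) : extr (realize h) s = h s := by
  classical
  rw [extr, dif_pos hs, inf'_realize hh hc hs, maxd_realize hh hc s]
  have reduce : ∀ (P : Finset ι → Prop) (inst : DecidablePred P),
      ∑ s' ∈ @Finset.filter _ P inst univ, h s'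
        = ∑ s' ∈ univ.filter (fun s' => h s' ≠ 0 ∧ P s'), h s' := by
    intro P inst
    rw [← Finset.sum_filter_of_ne (s := univ.filter P) (p := fun s' => h s' ≠ 0)
      (fun x _ hx => hx)]
    apply Finset.sum_congr _ (fun _ _ => rfl)
    ext s'
    simp only [Finset.mem_filter, Finset.mem_univ, true_and]
    tauto
  by_cases hmem : h s ≠ 0
  · have hkey : univ.filter (fun s' => h s' ≠ 0 ∧ s ⊆ s')
        = insert s (univ.filter (fun s' => h s' ≠ 0 ∧ ¬ s' ⊆ s)) := by
      ext u
      simp only [Finset.mem_filter, Finset.mem_univ, true_and, Finset.mem_insert]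
      constructor
      · rintro ⟨hu, hsub⟩
        by_cases hus : u ⊆ s
        · exact Or.inl (Finset.Subset.antisymm hus hsub)
        · exact Or.inr ⟨hu, hus⟩
      · rintro (rfl | ⟨hu, hnsub⟩)
        · exact ⟨hmem, subset_rfl⟩
        · refine ⟨hu, ?_⟩
          rcases eq_or_ne u s with rfl | hne
          · exact absurd subset_rfl hnsub
          · rcases hc (show u ∈ {s | h s ≠ 0} from hu) (show s ∈ {s | h s ≠ 0} from hmem) hne with h' | h'
            · exact absurd h' hnsub
            · exact h'
    have hnotmem : s ∉ univ.filter (fun s' => h s' ≠ 0 ∧ ¬ s' ⊆ s) := by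
      simp only [Finset.mem_filter]
      tauto
    rw [reduce (fun s' => s ⊆ s') _, reduce (fun s' => ¬ s' ⊆ s) _, hkey,
      Finset.sum_insert hnotmem]
    have : h s + ∑ s' ∈ univ.filter (fun s' => h s' ≠ 0 ∧ ¬ s' ⊆ s), h s'
        - ∑ s' ∈ univ.filter (fun s' => h s' ≠ 0 ∧ ¬ s' ⊆ s), h s' = h s := by ring
    rw [this]
    exact max_eq_right (hh s)
  · push_neg at hmem
    rw [hmem]
    apply max_eq_left
    rw [reduce (fun s' => s ⊆ s') _, reduce (fun s' => ¬ s' ⊆ s) _]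
    have hsub : univ.filter (fun s' => h s' ≠ 0 ∧ s ⊆ s')
        ⊆ univ.filter (fun s' => h s' ≠ 0 ∧ ¬ s' ⊆ s) := by
      intro u hu
      simp only [Finset.mem_filter, Finset.mem_univ, true_and] at hu ⊢
      refine ⟨hu.1, fun hus => ?_⟩
      have : u = s := Finset.Subset.antisymm hus hu.2
      rw [this] at hu
      exact hu.1 hmem
    have := Finset.sum_le_sum_of_subset_of_nonneg hsub (fun s' _ _ => hh s')
    linarith

end Hlemmas

end Generic
section Generic2

variable {ι : Type*} [Fintype ι] [DecidableEq ι]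

lemma realize_extr_zero {p : ι → ℝ} (hp0 : ∀ i, p i = 0) : realize (extr p) = p := by
  funext i
  rw [hp0 i]
  apply Finset.sum_eq_zero
  intro s _
  by_cases hi : i ∈ s
  · rw [if_pos hi]
    have hsne : s.Nonempty := ⟨i, hi⟩
    apply extr_of_le hsne
    obtain ⟨j, hj, hje⟩ := Finset.exists_mem_eq_inf' hsne p
    rw [hje, hp0 j]
    exact maxd_nonneg p sᶜ
  · rw [if_neg hi]

private lemma realize_extr_aux :
    ∀ (n : ℕ) (p : ι → ℝ), (∀ i, 0 ≤ p i) →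
      ((univ.image p).filter (fun x => 0 < x)).card ≤ n → realize (extr p) = p := by
  intro n
  induction n with
  | zero =>
    intro p hp hcard
    apply realize_extr_zero
    intro i
    by_contra hne
    have hpos : 0 < p i := lt_of_le_of_ne (hp i) (Ne.symm hne)
    have : p i ∈ (univ.image p).filter (fun x => 0 < x) :=
      Finset.mem_filter.2 ⟨Finset.mem_image_of_mem p (Finset.mem_univ i), hpos⟩
    have := Finset.card_pos.2 ⟨p i, this⟩
    omega
  | succ n ih =>
    intro p hp hcard
    by_cases hpos : ∃ i, 0 < p i
    · obtain ⟨iw, hiw⟩ := hpos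
      have hune : (univ : Finset ι).Nonempty := ⟨iw, Finset.mem_univ iw⟩
      set v := univ.sup' hune p with hv
      have hvpos : 0 < v := lt_of_lt_of_le hiw (Finset.le_sup' p (Finset.mem_univ iw))
      set s₁ := univ.filter (fun i => p i = v) with hs₁
      have hs₁ne : s₁.Nonempty := by
        obtain ⟨j, hj, hje⟩ := Finset.exists_mem_eq_sup' hune p
        exact ⟨j, Finset.mem_filter.2 ⟨hj, hje.symm⟩⟩
      have hmem_s₁ : ∀ i, i ∈ s₁ ↔ p i = v := by
        intro i; simp [hs₁]
      set m2 := maxd p s₁ᶜ with hm2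
      have hm2v : m2 < v := by
        rw [hm2, maxd]
        refine (Finset.fold_max_lt v).2 ⟨hvpos, ?_⟩
        intro i hi
        have h1 : p i ≤ v := Finset.le_sup' p (Finset.mem_univ i)
        have h2 : p i ≠ v := by
          have := Finset.mem_compl.1 hi
          rw [hmem_s₁] at this
          exact this
        exact lt_of_le_of_ne h1 h2
      have hm2nonneg : 0 ≤ m2 := maxd_nonneg p s₁ᶜ
      set p' := fun i => if p i = v then m2 else p i with hp'
      have hp'nonneg : ∀ i, 0 ≤ p' i := by
        intro i; rw [hp']; dsimp only; split
        · exact hm2nonneg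
        · exact hp i
      have hp'le : ∀ i, p' i ≤ m2 := by
        intro i; rw [hp']; dsimp only; split
        · exact le_rfl
        · rename_i hne
          exact le_maxd p (Finset.mem_compl.2 (fun hmem => hne ((hmem_s₁ i).1 hmem)))
      have hp'off : ∀ i, i ∉ s₁ → p' i = p i := by
        intro i hi
        rw [hp']; dsimp only
        rw [if_neg (fun hh => hi ((hmem_s₁ i).2 hh))]
      have hp'on : ∀ i, i ∈ s₁ → p' i = m2 := by
        intro i hi
        rw [hp']; dsimp only
        rw [if_pos ((hmem_s₁ i).1 hi)]
      -- c1
      have hinf1 : s₁.inf' hs₁ne p = v := by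
        apply le_antisymm
        · obtain ⟨j, hj⟩ := id hs₁ne
          calc s₁.inf' hs₁ne p ≤ p j := Finset.inf'_le p hj
            _ = v := (hmem_s₁ j).1 hj
        · exact Finset.le_inf' _ _ (fun i hi => ((hmem_s₁ i).1 hi).ge)
      have c1 : extr p s₁ = v - m2 := by
        rw [extr_of_lt hs₁ne (by rw [hinf1]; exact hm2v), hinf1]
      -- c3
      have hmaxd_s₁ : maxd p' s₁ᶜ = m2 := by
        rw [hm2]
        exact maxd_congr (fun i hi => hp'off i (Finset.mem_compl.1 hi))
      have c3 : extr p' s₁ = 0 := by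
        apply extr_of_le hs₁ne
        rw [hmaxd_s₁]
        obtain ⟨j, hj⟩ := id hs₁ne
        calc s₁.inf' hs₁ne p' ≤ p' j := Finset.inf'_le p' hj
          _ = m2 := hp'on j hj
      -- c2
      have c2 : ∀ s : Finset ι, s.Nonempty → s ≠ s₁ → extr p' s = extr p s := by
        intro s hsne hne
        by_cases hsub : s₁ ⊆ s
        · have hdiff : (s \ s₁).Nonempty := by
            rw [Finset.sdiff_nonempty]
            intro hss
            exact hne (Finset.Subset.antisymm hss hsub)
          obtain ⟨a, ha, hae⟩ := Finset.exists_mem_eq_inf' hdiff p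
          have haS : a ∈ s := (Finset.mem_sdiff.1 ha).1
          have haN : a ∉ s₁ := (Finset.mem_sdiff.1 ha).2
          have ham2 : p a ≤ m2 := le_maxd p (Finset.mem_compl.2 haN)
          have e1 : s.inf' hsne p = (s \ s₁).inf' hdiff p := by
            apply le_antisymm
            · rw [hae]; exact Finset.inf'_le p haS
            · apply Finset.le_inf'
              intro i hi
              by_cases hiv : i ∈ s₁
              · rw [hae]
                have : p i = v := (hmem_s₁ i).1 hiv
                rw [this]; linarith
              · exact Finset.inf'_le p (Finset.mem_sdiff.2 ⟨hi, hiv⟩)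
          have e2 : s.inf' hsne p' = (s \ s₁).inf' hdiff p := by
            apply le_antisymm
            · calc s.inf' hsne p' ≤ p' a := Finset.inf'_le p' haS
                _ = p a := hp'off a haN
                _ = (s \ s₁).inf' hdiff p := hae.symm
            · apply Finset.le_inf'
              intro i hi
              by_cases hiv : i ∈ s₁
              · rw [hae, hp'on i hiv]; linarith
              · rw [hp'off i hiv]
                exact Finset.inf'_le p (Finset.mem_sdiff.2 ⟨hi, hiv⟩)
          have e3 : maxd p' sᶜ = maxd p sᶜ := by
            apply maxd_congr
            intro i hi
            exact hp'off i (fun hh => (Finset.mem_compl.1 hi) (hsub hh))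
          rw [extr, dif_pos hsne, extr, dif_pos hsne, e1, e2, e3]
        · obtain ⟨a, ha1, has⟩ := Finset.not_subset.1 hsub
          have hpa : p a = v := (hmem_s₁ a).1 ha1
          have hz1 : extr p s = 0 := by
            apply extr_of_le hsne
            obtain ⟨j, hj, hje⟩ := Finset.exists_mem_eq_inf' hsne p
            rw [hje]
            calc p j ≤ v := Finset.le_sup' p (Finset.mem_univ j)
              _ = p a := hpa.symm
              _ ≤ maxd p sᶜ := le_maxd p (Finset.mem_compl.2 has)
          have hz2 : extr p' s = 0 := by
            apply extr_of_le hsne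
            obtain ⟨j, hj, hje⟩ := Finset.exists_mem_eq_inf' hsne p'
            rw [hje]
            calc p' j ≤ m2 := hp'le j
              _ = p' a := (hp'on a ha1).symm
              _ ≤ maxd p' sᶜ := le_maxd p' (Finset.mem_compl.2 has)
          rw [hz1, hz2]
      -- measure decrease
      have hvmem : v ∈ (univ.image p).filter (fun x => 0 < x) := by
        obtain ⟨j, hj, hje⟩ := Finset.exists_mem_eq_sup' hune p
        refine Finset.mem_filter.2 ⟨?_, hvpos⟩
        rw [hv, hje]
        exact Finset.mem_image_of_mem p (Finset.mem_univ j)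
      have hsubset : (univ.image p').filter (fun x => 0 < x)
          ⊆ ((univ.image p).filter (fun x => 0 < x)).erase v := by
        intro u hu
        obtain ⟨humem, hupos⟩ := Finset.mem_filter.1 hu
        obtain ⟨i, _, rfl⟩ := Finset.mem_image.1 humem
        by_cases hiv : i ∈ s₁
        · rw [hp'on i hiv] at hupos ⊢
          have hcne : s₁ᶜ.Nonempty := by
            by_contra hcon
            rw [Finset.not_nonempty_iff_eq_empty] at hcon
            rw [hm2, hcon] at hupos
            simp [maxd] at hupos
          obtain ⟨i₂, hi₂, he⟩ := maxd_exists hp hcne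
          rw [hm2, he]
          refine Finset.mem_erase.2 ⟨?_, Finset.mem_filter.2
            ⟨Finset.mem_image_of_mem p (Finset.mem_univ i₂), by rw [← he, ← hm2]; exact hupos⟩⟩
          rw [← he, ← hm2]
          exact ne_of_lt hm2v
        · rw [hp'off i hiv] at hupos ⊢
          refine Finset.mem_erase.2 ⟨?_, Finset.mem_filter.2
            ⟨Finset.mem_image_of_mem p (Finset.mem_univ i), hupos⟩⟩
          exact fun hh => hiv ((hmem_s₁ i).2 hh)
      have hcard' : ((univ.image p').filter (fun x => 0 < x)).card ≤ n := by
        calc ((univ.image p').filter (fun x => 0 < x)).card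
            ≤ (((univ.image p).filter (fun x => 0 < x)).erase v).card :=
              Finset.card_le_card hsubset
          _ = ((univ.image p).filter (fun x => 0 < x)).card - 1 :=
              Finset.card_erase_of_mem hvmem
          _ ≤ n := by
              have := Finset.card_pos.2 ⟨v, hvmem⟩
              omega
      have IH : realize (extr p') = p' := ih p' hp'nonneg hcard'
      -- conclusion
      funext i
      have hsplit : ∀ s : Finset ι, (if i ∈ s then extr p s else 0)
          = (if i ∈ s then extr p' s else 0)
            + (if s = s₁ then (if i ∈ s then v - m2 else 0) else 0) := by
        intro s
        by_cases hs1 : s = s₁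
        · rw [hs1]
          by_cases hi : i ∈ s₁
          · rw [if_pos hi, if_pos hi, if_pos rfl, if_pos hi, c3, c1]; ring
          · rw [if_neg hi, if_neg hi, if_pos rfl, if_neg hi]; ring
        · by_cases hi : i ∈ s
          · rw [if_pos hi, if_pos hi, if_neg hs1, c2 s ⟨i, hi⟩ hs1]; ring
          · rw [if_neg hi, if_neg hi, if_neg hs1]; ring
      have : realize (extr p) i = realize (extr p') i
          + (if i ∈ s₁ then v - m2 else 0) := by
        unfold realize
        rw [Finset.sum_congr rfl (fun s _ => hsplit s), Finset.sum_add_distrib]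
        congr 1
        rw [Finset.sum_ite_eq' univ s₁ (fun s => if i ∈ s then v - m2 else 0)]
        rw [if_pos (Finset.mem_univ s₁)]
      rw [this, IH]
      by_cases hi : i ∈ s₁
      · rw [if_pos hi, hp'on i hi]
        have : p i = v := (hmem_s₁ i).1 hi
        rw [this]; ring
      · rw [if_neg hi, hp'off i hi]; ring
    · push_neg at hpos
      exact realize_extr_zero (fun i => le_antisymm (hpos i) (hp i))

/-- L2 : reconstruction of a nonnegative point from its extracted coordinates. -/
lemma realize_extr {p : ι → ℝ} (hp : ∀ i, 0 ≤ p i) : realize (extr p) = p :=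
  realize_extr_aux _ p hp le_rfl

lemma sum_realize (h : Finset ι → ℝ) :
    ∑ i, realize h i = ∑ s : Finset ι, (s.card : ℝ) * h s := by
  unfold realize
  rw [Finset.sum_comm]
  apply Finset.sum_congr rfl
  intro s _
  rw [Finset.sum_ite_mem, Finset.univ_inter, Finset.sum_const, nsmul_eq_mul]

lemma realize_nonneg {h : Finset ι → ℝ} (hh : ∀ s, 0 ≤ h s) (i : ι) : 0 ≤ realize h i :=
  Finset.sum_nonneg (fun s _ => by split <;> [exact hh s; exact le_rfl])

-- continuity
lemma continuous_inf' {s : Finset ι} (hs : s.Nonempty) :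
    Continuous fun p : ι → ℝ => s.inf' hs p := by
  induction hs using Finset.Nonempty.cons_induction with
  | singleton a => simpa using continuous_apply a
  | cons a s ha hs ih =>
    have : (fun p : ι → ℝ => (Finset.cons a s ha).inf' (Finset.cons_nonempty ha) p)
        = fun p : ι → ℝ => min (p a) (s.inf' hs p) := by
      funext p
      rw [Finset.inf'_cons hs]
    rw [this]
    exact (continuous_apply a).min ih

lemma continuous_sup' {s : Finset ι} (hs : s.Nonempty) :
    Continuous fun p : ι → ℝ => s.sup' hs p := by
  induction hs using Finset.Nonempty.cons_induction with
  | singleton a => simpa using continuous_apply a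
  | cons a s ha hs ih =>
    have : (fun p : ι → ℝ => (Finset.cons a s ha).sup' (Finset.cons_nonempty ha) p)
        = fun p : ι → ℝ => max (p a) (s.sup' hs p) := by
      funext p
      rw [Finset.sup'_cons hs]
    rw [this]
    exact (continuous_apply a).max ih

lemma continuous_maxd (t : Finset ι) : Continuous fun p : ι → ℝ => maxd p t := by
  induction t using Finset.induction_on with
  | empty => simpa [maxd] using continuous_const
  | @insert a s ha ih =>
    have : (fun p : ι → ℝ => maxd p (insert a s)) = fun p => max (p a) (maxd p s) := by
      funext p
      rw [maxd, Finset.fold_insert ha]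
      rfl
    rw [this]
    exact (continuous_apply a).max ih

lemma continuous_extr (s : Finset ι) : Continuous fun p : ι → ℝ => extr p s := by
  by_cases hs : s.Nonempty
  · have : (fun p : ι → ℝ => extr p s)
        = fun p => max 0 (s.inf' hs p - maxd p sᶜ) := by
      funext p; rw [extr, dif_pos hs]
    rw [this]
    exact continuous_const.max ((continuous_inf' hs).sub (continuous_maxd sᶜ))
  · have : (fun p : ι → ℝ => extr p s) = fun _ => 0 := by
      funext p; rw [extr, dif_neg hs]
    rw [this]
    exact continuous_const

end Generic2

section Telescope

/-- the next-smaller element of a finite set of reals (default 0). -/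
noncomputable def nxt (V : Finset ℝ) (v : ℝ) : ℝ := (V.filter (· < v)).fold max 0 id

lemma nxt_lt {V : Finset ℝ} (hpos : ∀ v ∈ V, 0 < v) {b : ℝ} (hb : b ∈ V) : nxt V b < b := by
  rw [nxt]
  refine (Finset.fold_max_lt b).2 ⟨hpos b hb, ?_⟩
  intro x hx
  exact (Finset.mem_filter.1 hx).2

lemma telescope (V : Finset ℝ) (hpos : ∀ v ∈ V, 0 < v) :
    ∀ b ∈ V, ∑ v ∈ V.filter (· ≤ b), (v - nxt V v) = b := by
  suffices H : ∀ n : ℕ, ∀ b ∈ V, (V.filter (· ≤ b)).card ≤ n →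
      ∑ v ∈ V.filter (· ≤ b), (v - nxt V v) = b by
    intro b hb
    exact H (V.filter (· ≤ b)).card b hb le_rfl
  intro n
  induction n with
  | zero =>
    intro b hb hcard
    exact absurd hcard (by
      have : b ∈ V.filter (· ≤ b) := Finset.mem_filter.2 ⟨hb, le_rfl⟩
      have := Finset.card_pos.2 ⟨b, this⟩
      omega)
  | succ n ih =>
    intro b hb hcard
    have hsplit : V.filter (· ≤ b) = insert b (V.filter (· < b)) := by
      ext v
      simp only [Finset.mem_filter, Finset.mem_insert]
      constructor
      · rintro ⟨hv, hle⟩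
        rcases eq_or_lt_of_le hle with h | h
        · exact Or.inl h
        · exact Or.inr ⟨hv, h⟩
      · rintro (rfl | ⟨hv, hlt⟩)
        · exact ⟨hb, le_rfl⟩
        · exact ⟨hv, le_of_lt hlt⟩
    have hbnot : b ∉ V.filter (· < b) := by
      simp only [Finset.mem_filter]
      rintro ⟨-, h⟩
      exact lt_irrefl b h
    rw [hsplit, Finset.sum_insert hbnot]
    by_cases hlt : (V.filter (· < b)).Nonempty
    · set b' := (V.filter (· < b)).max' hlt with hb'
      have hb'mem := (V.filter (· < b)).max'_mem hlt
      have hb'V : b' ∈ V := (Finset.mem_filter.1 hb'mem).1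
      have hb'b : b' < b := (Finset.mem_filter.1 hb'mem).2
      have hnxt : nxt V b = b' := by
        apply le_antisymm
        · rw [nxt]
          refine (Finset.fold_max_le b').2 ⟨le_of_lt (hpos b' hb'V), ?_⟩
          intro x hx
          exact Finset.le_max' (V.filter (· < b)) x hx
        · rw [nxt]
          exact (Finset.le_fold_max b').2 (Or.inr ⟨b', hb'mem, le_rfl⟩)
      have hfeq : V.filter (· < b) = V.filter (· ≤ b') := by
        ext v
        simp only [Finset.mem_filter]
        constructor
        · rintro ⟨hv, h⟩
          exact ⟨hv, Finset.le_max' (V.filter (· < b)) v (Finset.mem_filter.2 ⟨hv, h⟩)⟩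
        · rintro ⟨hv, h⟩
          exact ⟨hv, lt_of_le_of_lt h hb'b⟩
      have hcard' : (V.filter (· ≤ b')).card ≤ n := by
        have hss : V.filter (· ≤ b') ⊂ V.filter (· ≤ b) := by
          rw [hsplit, ← hfeq]
          exact Finset.ssubset_insert hbnot
        have := Finset.card_lt_card hss
        omega
      rw [hfeq, ih b' hb'V hcard', hnxt]
      ring
    · rw [Finset.not_nonempty_iff_eq_empty] at hlt
      rw [hlt]
      have : nxt V b = 0 := by
        rw [nxt, hlt]
        rfl
      rw [this]
      simp

lemma filter_le_max {V : Finset ℝ} {b : ℝ} (hmax : ∀ v ∈ V, v ≤ b) :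
    V.filter (· ≤ b) = V := by
  apply Finset.filter_true_of_mem
  exact hmax

end Telescope
section Barycenters

lemma faceBar_apply (m : ℕ) {s : Finset (Fin (m + 1))} (hs : s.Nonempty) (j : Fin (m + 1)) :
    faceBar m s j = if j ∈ s then (s.card : ℝ)⁻¹ else 0 := by
  rw [faceBar, Finset.centroid_def,
    Finset.affineCombination_eq_linear_combination _ _ _
      (Finset.sum_centroidWeights_eq_one_of_nonempty ℝ s hs),
    Finset.sum_apply]
  simp only [Finset.centroidWeights_apply, Pi.smul_apply, smul_eq_mul, mul_ite, mul_one,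
    mul_zero]
  rw [Finset.sum_ite_eq s j (fun _ => (s.card : ℝ)⁻¹)]

/-- the coordinate function of a chain barycenter. -/
noncomputable def cbar (m : ℕ) (c : Finset (Finset (Fin (m + 1)))) :
    Finset (Fin (m + 1)) → ℝ :=
  fun s => if s ∈ c then ((c.card : ℝ)⁻¹ * (s.card : ℝ)⁻¹) else 0

lemma cbar_nonneg (m : ℕ) (c : Finset (Finset (Fin (m + 1)))) (s : Finset (Fin (m + 1))) :
    0 ≤ cbar m c s := by
  rw [cbar]; split
  · positivity
  · exact le_rfl

lemma cbar_ne_zero_iff {m : ℕ} {c : Finset (Finset (Fin (m + 1)))} (hc : isSdSimplex m c)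
    (s : Finset (Fin (m + 1))) : cbar m c s ≠ 0 ↔ s ∈ c := by
  rw [cbar]
  by_cases h : s ∈ c
  · simp only [if_pos h, h, iff_true]
    have h1 : (c.card : ℝ) ≠ 0 := Nat.cast_ne_zero.2 (Finset.card_ne_zero.2 hc.1)
    have h2 : (s.card : ℝ) ≠ 0 := Nat.cast_ne_zero.2 (Finset.card_ne_zero.2 (hc.2.1 s h))
    exact mul_ne_zero (inv_ne_zero h1) (inv_ne_zero h2)
  · simp [h]

lemma cbar_chain {m : ℕ} {c : Finset (Finset (Fin (m + 1)))} (hc : isSdSimplex m c) :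
    IsChain (· ⊆ ·) {s : Finset (Fin (m + 1)) | cbar m c s ≠ 0} := by
  have : {s : Finset (Fin (m + 1)) | cbar m c s ≠ 0} = ↑c := by
    ext s; simp [cbar_ne_zero_iff hc]
  rw [this]
  exact hc.2.2

lemma chainBar_eq_realize {m : ℕ} {c : Finset (Finset (Fin (m + 1)))} (hc : isSdSimplex m c) :
    chainBar m c = realize (cbar m c) := by
  funext i
  rw [chainBar, Finset.centroid_def,
    Finset.affineCombination_eq_linear_combination _ _ _
      (Finset.sum_centroidWeights_eq_one_of_nonempty ℝ c hc.1),
    Finset.sum_apply, realize]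
  have hcomm : ∀ s : Finset (Fin (m + 1)),
      (if i ∈ s then cbar m c s else 0)
        = (if s ∈ c then (if i ∈ s then ((c.card : ℝ)⁻¹ * (s.card : ℝ)⁻¹) else 0) else 0) := by
    intro s
    rw [cbar]
    by_cases h1 : i ∈ s <;> by_cases h2 : s ∈ c <;> simp [h1, h2]
  rw [Finset.sum_congr rfl (fun s _ => hcomm s), Finset.sum_ite_mem, Finset.univ_inter]
  apply Finset.sum_congr rfl
  intro s hsmem
  rw [Finset.centroidWeights_apply, Pi.smul_apply, smul_eq_mul,
    faceBar_apply m (hc.2.1 s hsmem) i]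
  by_cases h : i ∈ s <;> simp [h, mul_comm]

lemma extr_chainBar {m : ℕ} {c : Finset (Finset (Fin (m + 1)))} (hc : isSdSimplex m c)
    (s : Finset (Fin (m + 1))) : extr (chainBar m c) s = cbar m c s := by
  rcases s.eq_empty_or_nonempty with rfl | hs
  · rw [extr_empty, cbar]
    have : ∅ ∉ c := fun h => by simpa using hc.2.1 ∅ h
    rw [if_neg this]
  · rw [chainBar_eq_realize hc]
    exact extr_realize (cbar_nonneg m c) (cbar_chain hc) hs

lemma chainBar_inj {m : ℕ} {c c' : Finset (Finset (Fin (m + 1)))} (hc : isSdSimplex m c)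
    (hc' : isSdSimplex m c') (h : chainBar m c = chainBar m c') : c = c' := by
  ext s
  rw [← cbar_ne_zero_iff hc s, ← cbar_ne_zero_iff hc' s, ← extr_chainBar hc s,
    ← extr_chainBar hc' s, h]

lemma chainBar_nonneg {m : ℕ} {c : Finset (Finset (Fin (m + 1)))} (hc : isSdSimplex m c)
    (i : Fin (m + 1)) : 0 ≤ chainBar m c i := by
  rw [chainBar_eq_realize hc]
  exact realize_nonneg (cbar_nonneg m c) i

end Barycenters

section MainSets

/-- the characterization of the open dual cell by coordinate extraction. -/
def Tgeo (m k : ℕ) (S : Fin (k + 1) → Finset (Fin (m + 1))) : Set (Fin (m + 1) → ℝ) :=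
  {p | (∀ i, 0 ≤ p i) ∧ (∑ i, p i) = 1 ∧
    (∀ j, ((S j).card : ℝ) * extr p (S j) = ((S 0).card : ℝ) * extr p (S 0)) ∧
    (∀ s : Finset (Fin (m + 1)), s ∉ Finset.image S Finset.univ →
      (s.card : ℝ) * extr p s < ((S 0).card : ℝ) * extr p (S 0))}

end MainSets

section Dir1

variable {m k : ℕ} {S : Fin (k + 1) → Finset (Fin (m + 1))}

lemma openDualCell_subset_Tgeo (hne : ∀ j, (S j).Nonempty) :
    openDualCell m (Finset.image S Finset.univ) ⊆ Tgeo m k S := by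
  set ρ := Finset.image S Finset.univ with hρ
  intro p hp
  rw [openDualCell] at hp
  simp only [Set.mem_iUnion] at hp
  obtain ⟨Cc, ⟨hCcne, hCcSd, hCcchain, hρCc, hρsub⟩, hhull⟩ := hp
  obtain ⟨w, hwpos, hwsum, hwcomb⟩ := hhull
  -- rewrite the sums over the image as sums over `Cc`
  have hinj : ∀ c ∈ Cc, ∀ c' ∈ Cc, chainBar m c = chainBar m c' → c = c' :=
    fun c hc c' hc' h => chainBar_inj (hCcSd c hc) (hCcSd c' hc') h
  set W : Finset (Finset (Fin (m + 1))) → ℝ := fun c => w (chainBar m c) with hW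
  have hWpos : ∀ c ∈ Cc, 0 < W c := fun c hc =>
    hwpos _ (Finset.mem_image_of_mem _ hc)
  have hWsum : ∑ c ∈ Cc, W c = 1 := by rw [← hwsum, Finset.sum_image hinj]
  have hWcomb : ∀ i, ∑ c ∈ Cc, W c * chainBar m c i = p i := by
    intro i
    rw [← congrFun hwcomb i, Finset.sum_apply, Finset.sum_image hinj]
    apply Finset.sum_congr rfl
    intro c hc
    rw [Pi.smul_apply, smul_eq_mul]
  -- the combined coordinate function
  set hfun : Finset (Fin (m + 1)) → ℝ := fun s => ∑ c ∈ Cc, W c * cbar m c s with hhfun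
  have hfun_nonneg : ∀ s, 0 ≤ hfun s := fun s =>
    Finset.sum_nonneg (fun c hc => mul_nonneg (hWpos c hc).le (cbar_nonneg m c s))
  have hfun_supp : ∀ s, hfun s ≠ 0 → ∃ c ∈ Cc, s ∈ c := by
    intro s h
    by_contra hcon
    push_neg at hcon
    refine h (Finset.sum_eq_zero (fun c hc => ?_))
    have hz : cbar m c s = 0 := by
      by_contra h'
      exact hcon c hc ((cbar_ne_zero_iff (hCcSd c hc) s).1 h')
    rw [hz, mul_zero]
  have hfun_chain : IsChain (· ⊆ ·) {s | hfun s ≠ 0} := by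
    intro s hs s' hs' hne'
    obtain ⟨c, hc, hsc⟩ := hfun_supp s hs
    obtain ⟨c', hc', hsc'⟩ := hfun_supp s' hs'
    have hcc : s ∈ c' ∨ s' ∈ c := by
      rcases eq_or_ne c c' with rfl | hcne
      · exact Or.inl hsc
      · rcases hCcchain hc hc' hcne with h | h
        · exact Or.inl (h hsc)
        · exact Or.inr (h hsc')
    rcases hcc with h | h
    · exact (hCcSd c' hc').2.2 h hsc' hne'
    · exact (hCcSd c hc).2.2 hsc h hne'
  have hpre : p = realize hfun := by
    funext i
    rw [← hWcomb i, realize]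
    have : ∀ c ∈ Cc, W c * chainBar m c i
        = ∑ s ∈ Finset.univ, (if i ∈ s then W c * cbar m c s else 0) := by
      intro c hc
      rw [chainBar_eq_realize (hCcSd c hc), realize, Finset.mul_sum]
      apply Finset.sum_congr rfl
      intro s _
      by_cases h : i ∈ s <;> simp [h]
    rw [Finset.sum_congr rfl this, Finset.sum_comm]
    apply Finset.sum_congr rfl
    intro s _
    by_cases h : i ∈ s
    · rw [Finset.sum_congr rfl (fun c (_ : c ∈ Cc) => if_pos h), if_pos h]
    · rw [Finset.sum_congr rfl (fun c (_ : c ∈ Cc) => if_neg h), if_neg h,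
        Finset.sum_const_zero]
  have hext : ∀ s, s.Nonempty → extr p s = hfun s := by
    intro s hs
    rw [hpre]
    exact extr_realize hfun_nonneg hfun_chain hs
  -- the `t`-values
  have htt : ∀ s : Finset (Fin (m + 1)), s.Nonempty →
      (s.card : ℝ) * extr p s = ∑ c ∈ Cc.filter (fun c => s ∈ c), W c * (c.card : ℝ)⁻¹ := by
    intro s hs
    rw [hext s hs, hhfun, Finset.mul_sum]
    rw [Finset.sum_filter]
    apply Finset.sum_congr rfl
    intro c _
    rw [cbar]
    by_cases h : s ∈ c
    · rw [if_pos h, if_pos h]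
      have h2 : (s.card : ℝ) ≠ 0 := Nat.cast_ne_zero.2 (Finset.card_ne_zero.2 hs)
      rw [show (s.card : ℝ) * (W c * ((c.card : ℝ)⁻¹ * (s.card : ℝ)⁻¹))
          = (W c * (c.card : ℝ)⁻¹) * ((s.card : ℝ) * (s.card : ℝ)⁻¹) from by ring,
        mul_inv_cancel₀ h2, mul_one]
    · rw [if_neg h, if_neg h, mul_zero, mul_zero]
  have hfiltρ : ∀ j, Cc.filter (fun c => S j ∈ c) = Cc := by
    intro j
    apply Finset.filter_true_of_mem
    intro c hc
    exact hρsub c hc (Finset.mem_image_of_mem S (Finset.mem_univ j))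
  have htα : ∀ j, ((S j).card : ℝ) * extr p (S j) = ∑ c ∈ Cc, W c * (c.card : ℝ)⁻¹ := by
    intro j
    rw [htt (S j) (hne j), hfiltρ j]
  have hterm_pos : ∀ c ∈ Cc, 0 < W c * (c.card : ℝ)⁻¹ := by
    intro c hc
    have h1 : (0 : ℝ) < (c.card : ℝ) := Nat.cast_pos.2 (Finset.card_pos.2 (hCcSd c hc).1)
    exact mul_pos (hWpos c hc) (inv_pos.2 h1)
  refine ⟨?_, ?_, ?_, ?_⟩
  · intro i
    rw [hpre]
    exact realize_nonneg hfun_nonneg i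
  · -- sum = 1
    have : ∑ i, p i = ∑ s : Finset (Fin (m + 1)), (s.card : ℝ) * hfun s := by
      rw [hpre, sum_realize]
    rw [this]
    have hswap : ∀ s : Finset (Fin (m + 1)), (s.card : ℝ) * hfun s
        = ∑ c ∈ Cc, (if s ∈ c then W c * (c.card : ℝ)⁻¹ else 0) := by
      intro s
      rcases s.eq_empty_or_nonempty with rfl | hs
      · simp only [Finset.card_empty, Nat.cast_zero, zero_mul]
        symm
        apply Finset.sum_eq_zero
        intro c hc
        rw [if_neg (fun h => by simpa using (hCcSd c hc).2.1 ∅ h)]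
      · have := htt s hs
        rw [hext s hs] at this
        rw [this, Finset.sum_filter]
    rw [Finset.sum_congr rfl (fun s _ => hswap s), Finset.sum_comm]
    calc ∑ c ∈ Cc, ∑ s : Finset (Fin (m + 1)), (if s ∈ c then W c * (c.card : ℝ)⁻¹ else 0)
        = ∑ c ∈ Cc, W c := by
          apply Finset.sum_congr rfl
          intro c hc
          rw [Finset.sum_ite_mem, Finset.univ_inter, Finset.sum_const, nsmul_eq_mul]
          have h1 : (c.card : ℝ) ≠ 0 :=
            Nat.cast_ne_zero.2 (Finset.card_ne_zero.2 (hCcSd c hc).1)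
          field_simp
      _ = 1 := hWsum
  · intro j
    rw [htα j, htα 0]
  · intro s hsρ
    rw [htα 0]
    rcases s.eq_empty_or_nonempty with rfl | hs
    · simp only [Finset.card_empty, Nat.cast_zero, zero_mul]
      exact Finset.sum_pos hterm_pos hCcne
    · rw [htt s hs]
      apply Finset.sum_lt_sum_of_subset (Finset.filter_subset _ _) hρCc
      · rw [Finset.mem_filter]
        exact fun h => hsρ h.2
      · exact hterm_pos _ hρCc
      · exact fun c hc _ => (hterm_pos c hc).le
end Dir1

section Dir2

private lemma cancel_aux {a b c : ℝ} (ha : a ≠ 0) : a * b * (a⁻¹ * c) = b * c := by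
  rw [show a * b * (a⁻¹ * c) = b * c * (a * a⁻¹) from by ring, mul_inv_cancel₀ ha, mul_one]

variable {m k : ℕ} {S : Fin (k + 1) → Finset (Fin (m + 1))}

lemma Tgeo_subset_openDualCell (hne : ∀ j, (S j).Nonempty) :
    Tgeo m k S ⊆ openDualCell m (Finset.image S Finset.univ) := by
  set ρ := Finset.image S Finset.univ with hρdef
  intro p hp
  obtain ⟨hp0, hp1, hpeq, hplt⟩ := hp
  set t : Finset (Fin (m + 1)) → ℝ := fun s => (s.card : ℝ) * extr p s with ht
  set α : ℝ := ((S 0).card : ℝ) * extr p (S 0) with hα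
  have hρne : ∀ s ∈ ρ, s.Nonempty := by
    rintro s hs
    obtain ⟨j, -, rfl⟩ := Finset.mem_image.1 hs
    exact hne j
  have hempty_notρ : (∅ : Finset (Fin (m + 1))) ∉ ρ := fun h => by simpa using hρne ∅ h
  have hαpos : 0 < α := by simpa using hplt ∅ hempty_notρ
  have htρ : ∀ s ∈ ρ, t s = α := by
    rintro s hs
    obtain ⟨j, -, rfl⟩ := Finset.mem_image.1 hs
    exact hpeq j
  have ht_nonneg : ∀ s, 0 ≤ t s := fun s =>
    mul_nonneg (Nat.cast_nonneg _) (extr_nonneg p s)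
  have htlt : ∀ s ∉ ρ, t s < α := fun s hs => hplt s hs
  set C : Finset (Finset (Fin (m + 1))) := Finset.univ.filter (fun s => t s ≠ 0) with hC
  have hmemC : ∀ s, s ∈ C ↔ t s ≠ 0 := by intro s; simp [hC]
  have hCpos : ∀ s ∈ C, 0 < t s := fun s hs =>
    lt_of_le_of_ne (ht_nonneg s) (Ne.symm ((hmemC s).1 hs))
  have hCne : ∀ s ∈ C, s.Nonempty := by
    intro s hs
    rw [← Finset.card_ne_zero]
    intro h
    exact (hmemC s).1 hs (by rw [ht]; simp [h])
  have hCchain : IsChain (· ⊆ ·) (↑C : Set (Finset (Fin (m + 1)))) := by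
    refine (extr_support_chain p).mono ?_
    intro s hs
    have hts : t s ≠ 0 := (hmemC s).1 (Finset.mem_coe.1 hs)
    intro h0
    exact hts (by rw [ht]; simp [h0])
  have hρC : ∀ s ∈ ρ, s ∈ C := by
    intro s hs
    rw [hmemC, htρ s hs]
    exact ne_of_gt hαpos
  set V : Finset ℝ := insert α ((C \ ρ).image t) with hV
  have hαV : α ∈ V := Finset.mem_insert_self _ _
  have hVpos : ∀ v ∈ V, 0 < v := by
    intro v hv
    rcases Finset.mem_insert.1 hv with rfl | hv
    · exact hαpos
    · obtain ⟨s, hs, rfl⟩ := Finset.mem_image.1 hv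
      exact hCpos s (Finset.mem_sdiff.1 hs).1
  have hVle : ∀ v ∈ V, v ≤ α := by
    intro v hv
    rcases Finset.mem_insert.1 hv with rfl | hv
    · exact le_rfl
    · obtain ⟨s, hs, rfl⟩ := Finset.mem_image.1 hv
      exact (htlt s (Finset.mem_sdiff.1 hs).2).le
  set cv : ℝ → Finset (Finset (Fin (m + 1))) :=
    fun v => ρ ∪ C.filter (fun s => v ≤ t s) with hcv
  have hmemcv : ∀ v s, s ∈ cv v ↔ s ∈ ρ ∨ (s ∈ C ∧ v ≤ t s) := by
    intro v s
    simp [hcv, Finset.mem_union, Finset.mem_filter]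
  have hcvsubC : ∀ v, cv v ⊆ C := by
    intro v s hs
    rcases (hmemcv v s).1 hs with h | h
    · exact hρC s h
    · exact h.1
  have hcvSd : ∀ v, isSdSimplex m (cv v) := by
    intro v
    refine ⟨⟨S 0, (hmemcv v _).2 (Or.inl (Finset.mem_image_of_mem S (Finset.mem_univ 0)))⟩,
      fun s hs => hCne s (hcvsubC v hs), ?_⟩
    exact hCchain.mono (Finset.coe_subset.2 (hcvsubC v))
  have hcvmono : ∀ v v' : ℝ, v' ≤ v → cv v ⊆ cv v' := by
    intro v v' hle s hs
    rcases (hmemcv v s).1 hs with h | h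
    · exact (hmemcv v' s).2 (Or.inl h)
    · exact (hmemcv v' s).2 (Or.inr ⟨h.1, le_trans hle h.2⟩)
  have hcvα : cv α = ρ := by
    apply Finset.Subset.antisymm
    · intro s hs
      rcases (hmemcv α s).1 hs with h | h
      · exact h
      · by_contra hsρ
        exact absurd (htlt s hsρ) (not_lt.2 h.2)
    · intro s hs
      exact (hmemcv α s).2 (Or.inl hs)
  have hρcv : ∀ v, ρ ⊆ cv v := fun v s hs => (hmemcv v s).2 (Or.inl hs)
  have hcvinj : ∀ v ∈ V, ∀ v' ∈ V, cv v = cv v' → v = v' := by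
    have key : ∀ v ∈ V, ∀ v' ∈ V, v < v' → cv v ≠ cv v' := by
      intro v hv v' hv' hlt heq
      have hvα : v ≠ α := fun h => absurd (hVle v' hv') (not_le.2 (h ▸ hlt))
      have hvimg : v ∈ (C \ ρ).image t := by
        rcases Finset.mem_insert.1 hv with h | h
        · exact absurd h hvα
        · exact h
      obtain ⟨s₀, hs₀, hts₀⟩ := Finset.mem_image.1 hvimg
      obtain ⟨hs₀C, hs₀ρ⟩ := Finset.mem_sdiff.1 hs₀
      have h1 : s₀ ∈ cv v := (hmemcv v s₀).2 (Or.inr ⟨hs₀C, hts₀.ge⟩)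
      rw [heq] at h1
      rcases (hmemcv v' s₀).1 h1 with h | h
      · exact hs₀ρ h
      · rw [hts₀] at h
        exact absurd h.2 (not_le.2 hlt)
    intro v hv v' hv' heq
    rcases lt_trichotomy v v' with h | h | h
    · exact absurd heq (key v hv v' hv' h)
    · exact h
    · exact absurd heq.symm (key v' hv' v hv h)
  have hkey : ∀ s, ∑ v ∈ V.filter (fun v => s ∈ cv v), (v - nxt V v) = t s := by
    intro s
    by_cases hsC : s ∈ C
    · by_cases hsρ : s ∈ ρ
      · have hfeq : V.filter (fun v => s ∈ cv v) = V :=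
          Finset.filter_true_of_mem (fun v _ => hρcv v hsρ)
        have htel := telescope V hVpos α hαV
        rw [filter_le_max hVle] at htel
        rw [hfeq, htel, htρ s hsρ]
      · have htV : t s ∈ V := Finset.mem_insert_of_mem
          (Finset.mem_image_of_mem t (Finset.mem_sdiff.2 ⟨hsC, hsρ⟩))
        have hfeq : V.filter (fun v => s ∈ cv v) = V.filter (· ≤ t s) := by
          ext v
          simp only [Finset.mem_filter]
          constructor
          · rintro ⟨hvV, hmem⟩
            rcases (hmemcv v s).1 hmem with h | h
            · exact absurd h hsρ
            · exact ⟨hvV, h.2⟩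
          · rintro ⟨hvV, hle⟩
            exact ⟨hvV, (hmemcv v s).2 (Or.inr ⟨hsC, hle⟩)⟩
        rw [hfeq, telescope V hVpos (t s) htV]
    · have h0 : t s = 0 := by
        by_contra h
        exact hsC ((hmemC s).2 h)
      have hfeq : V.filter (fun v => s ∈ cv v) = ∅ := by
        rw [Finset.filter_eq_empty_iff]
        intro v _ hmem
        exact hsC (hcvsubC v hmem)
      rw [hfeq, Finset.sum_empty, h0]
  have hsum_t : ∑ s : Finset (Fin (m + 1)), t s = 1 := by
    calc ∑ s : Finset (Fin (m + 1)), t s = ∑ i, realize (extr p) i := (sum_realize (extr p)).symm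
      _ = ∑ i, p i := by rw [realize_extr hp0]
      _ = 1 := hp1
  have master : ∀ G : Finset (Fin (m + 1)) → ℝ,
      ∑ v ∈ V, ∑ s : Finset (Fin (m + 1)), (if s ∈ cv v then (v - nxt V v) * G s else 0)
        = ∑ s : Finset (Fin (m + 1)), t s * G s := by
    intro G
    rw [Finset.sum_comm]
    apply Finset.sum_congr rfl
    intro s _
    have hstep : ∀ v ∈ V, (if s ∈ cv v then (v - nxt V v) * G s else 0)
        = (if s ∈ cv v then (v - nxt V v) else 0) * G s := by
      intro v _
      split <;> simp
    rw [Finset.sum_congr rfl hstep, ← Finset.sum_mul, ← Finset.sum_filter, hkey s]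
  set Cc : Finset (Finset (Finset (Fin (m + 1)))) := V.image cv with hCcdef
  have hφinj : ∀ v ∈ V, ∀ v' ∈ V, chainBar m (cv v) = chainBar m (cv v') → v = v' :=
    fun v hv v' hv' h => hcvinj v hv v' hv' (chainBar_inj (hcvSd v) (hcvSd v') h)
  have hcard_pos : ∀ v, (0 : ℝ) < ((cv v).card : ℝ) := fun v =>
    Nat.cast_pos.2 (Finset.card_pos.2 (hcvSd v).1)
  rw [openDualCell]
  simp only [Set.mem_iUnion]
  refine ⟨Cc, ⟨?_, ?_, ?_, ?_, ?_⟩, ?_⟩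
  · exact ⟨cv α, Finset.mem_image_of_mem cv hαV⟩
  · rintro c hc
    obtain ⟨v, hv, rfl⟩ := Finset.mem_image.1 hc
    exact hcvSd v
  · rintro c hc c' hc' hne'
    obtain ⟨v, hv, rfl⟩ := Finset.mem_image.1 (Finset.mem_coe.1 hc)
    obtain ⟨v', hv', rfl⟩ := Finset.mem_image.1 (Finset.mem_coe.1 hc')
    rcases le_total v' v with h | h
    · exact Or.inl (hcvmono v v' h)
    · exact Or.inr (hcvmono v' v h)
  · rw [← hcvα]
    exact Finset.mem_image_of_mem cv hαV
  · rintro c hc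
    obtain ⟨v, hv, rfl⟩ := Finset.mem_image.1 hc
    exact hρcv v
  · -- membership in the open hull
    set w : (Fin (m + 1) → ℝ) → ℝ := fun x =>
      ∑ v ∈ V.filter (fun v => chainBar m (cv v) = x), ((cv v).card : ℝ) * (v - nxt V v)
      with hw
    have himg : Cc.image (chainBar m) = V.image (fun v => chainBar m (cv v)) := by
      rw [hCcdef, Finset.image_image]
      rfl
    have hwv : ∀ v ∈ V, w (chainBar m (cv v)) = ((cv v).card : ℝ) * (v - nxt V v) := by
      intro v hv
      have hfilt : V.filter (fun v' => chainBar m (cv v') = chainBar m (cv v)) = {v} := by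
        ext v'
        simp only [Finset.mem_filter, Finset.mem_singleton]
        constructor
        · rintro ⟨hv', heq⟩
          exact hφinj v' hv' v hv heq
        · rintro rfl
          exact ⟨hv, rfl⟩
      rw [hw]
      dsimp only
      rw [hfilt, Finset.sum_singleton]
    have hwtpos : ∀ v ∈ V, 0 < ((cv v).card : ℝ) * (v - nxt V v) := fun v hv =>
      mul_pos (hcard_pos v) (sub_pos.2 (nxt_lt hVpos hv))
    refine ⟨w, ?_, ?_, ?_⟩
    · intro x hx
      rw [himg] at hx
      obtain ⟨v, hv, rfl⟩ := Finset.mem_image.1 hx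
      rw [hwv v hv]
      exact hwtpos v hv
    · rw [himg, Finset.sum_image hφinj, Finset.sum_congr rfl hwv]
      have hcv_card : ∀ v ∈ V, ((cv v).card : ℝ) * (v - nxt V v)
          = ∑ s : Finset (Fin (m + 1)), (if s ∈ cv v then (v - nxt V v) * 1 else 0) := by
        intro v _
        rw [Finset.sum_ite_mem, Finset.univ_inter, Finset.sum_const, nsmul_eq_mul, mul_one]
      rw [Finset.sum_congr rfl hcv_card, master (fun _ => 1)]
      simpa using hsum_t
    · have hpt : ∀ i, ∑ x ∈ Cc.image (chainBar m), w x * x i = p i := by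
        intro i
        rw [himg, Finset.sum_image hφinj]
        have hstep : ∀ v ∈ V, w (chainBar m (cv v)) * chainBar m (cv v) i
            = ∑ s : Finset (Fin (m + 1)),
              (if s ∈ cv v then (v - nxt V v) * (if i ∈ s then (s.card : ℝ)⁻¹ else 0) else 0) := by
          intro v hv
          rw [hwv v hv, chainBar_eq_realize (hcvSd v), realize, Finset.mul_sum]
          apply Finset.sum_congr rfl
          intro s _
          simp only [cbar]
          by_cases h1 : i ∈ s <;> by_cases h2 : s ∈ cv v
          · simp only [if_pos h1, if_pos h2]
            exact cancel_aux (ne_of_gt (hcard_pos v))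
          · simp [h1, h2]
          · simp [h1, h2]
          · simp [h1, h2]
        rw [Finset.sum_congr rfl hstep,
          master (fun s => if i ∈ s then (s.card : ℝ)⁻¹ else 0)]
        have hfinal : ∀ s : Finset (Fin (m + 1)),
            t s * (if i ∈ s then (s.card : ℝ)⁻¹ else 0) = (if i ∈ s then extr p s else 0) := by
          intro s
          by_cases h : i ∈ s
          · rw [if_pos h, if_pos h, ht]
            dsimp only
            have h2 : (s.card : ℝ) ≠ 0 := Nat.cast_ne_zero.2 (Finset.card_ne_zero.2 ⟨i, h⟩)
            rw [show (s.card : ℝ) * extr p s * (s.card : ℝ)⁻¹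
                = extr p s * ((s.card : ℝ) * (s.card : ℝ)⁻¹) from by ring,
              mul_inv_cancel₀ h2, mul_one]
          · rw [if_neg h, if_neg h, mul_zero]
        rw [Finset.sum_congr rfl (fun s _ => hfinal s)]
        have hre : realize (extr p) = p := realize_extr hp0
        calc ∑ s : Finset (Fin (m + 1)), (if i ∈ s then extr p s else 0)
            = realize (extr p) i := rfl
          _ = p i := by rw [hre]
      funext i
      rw [Finset.sum_apply]
      rw [← hpt i]
      apply Finset.sum_congr rfl
      intro x _
      rw [Pi.smul_apply, smul_eq_mul]

lemma openDualCell_eq_Tgeo (hne : ∀ j, (S j).Nonempty) :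
    openDualCell m (Finset.image S Finset.univ) = Tgeo m k S :=
  Set.Subset.antisymm (openDualCell_subset_Tgeo hne) (Tgeo_subset_openDualCell hne)

end Dir2

section E2sec

private lemma sum_filter_reduce {β : Type*} [Fintype β] (h : β → ℝ) (P : β → Prop)
    (instP : DecidablePred P) :
    ∑ x ∈ @Finset.filter _ P instP Finset.univ, h x
      = ∑ x ∈ Finset.univ.filter (fun x => h x ≠ 0 ∧ P x), h x := by
  rw [← Finset.sum_filter_of_ne (s := @Finset.filter _ P instP Finset.univ)
    (p := fun x => h x ≠ 0) (fun x _ hx => hx)]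
  apply Finset.sum_congr _ (fun _ _ => rfl)
  ext x
  simp only [Finset.mem_filter, Finset.mem_univ, true_and]
  tauto

/-- the scaled coordinate values. -/
noncomputable def tval (m : ℕ) (p : Fin (m + 1) → ℝ) (s : Finset (Fin (m + 1))) : ℝ :=
  (s.card : ℝ) * extr p s

/-- coordinates of the map from the dual cell to the linear model. -/
noncomputable def uT (m k : ℕ) (S : Fin (k + 1) → Finset (Fin (m + 1)))
    (p : Fin (m + 1) → ℝ) (s : Finset (Fin (m + 1))) : ℝ :=
  if s ∈ Finset.image S Finset.univ then 0
  else tval m p s / (tval m p (S 0) - tval m p s)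

noncomputable def Fmap (m k : ℕ) (S : Fin (k + 1) → Finset (Fin (m + 1)))
    (p : Fin (m + 1) → ℝ) : Fin (m + 1) → ℝ := realize (uT m k S p)

noncomputable def rOf (m : ℕ) (x : Fin (m + 1) → ℝ) (s : Finset (Fin (m + 1))) : ℝ :=
  extr x s / (1 + extr x s)

noncomputable def aOf (m k : ℕ) (S : Fin (k + 1) → Finset (Fin (m + 1)))
    (x : Fin (m + 1) → ℝ) : ℝ :=
  ((k + 1 : ℝ) + ∑ s ∈ Finset.univ.filter
    (fun s => s ∉ Finset.image S Finset.univ), rOf m x s)⁻¹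

noncomputable def hG (m k : ℕ) (S : Fin (k + 1) → Finset (Fin (m + 1)))
    (x : Fin (m + 1) → ℝ) (s : Finset (Fin (m + 1))) : ℝ :=
  if s ∈ Finset.image S Finset.univ then aOf m k S x / (s.card : ℝ)
  else aOf m k S x * rOf m x s / (s.card : ℝ)

noncomputable def Gmap (m k : ℕ) (S : Fin (k + 1) → Finset (Fin (m + 1)))
    (x : Fin (m + 1) → ℝ) : Fin (m + 1) → ℝ := realize (hG m k S x)

/-- the linear model of the open dual cell. -/
def Xs (m k : ℕ) (S : Fin (k + 1) → Finset (Fin (m + 1)))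
    (hne : ∀ j, (S j).Nonempty) : Set (Fin (m + 1) → ℝ) :=
  {x | (∀ i, 0 ≤ x i) ∧ ∀ j, (S j).inf' (hne j) x = maxd x (S j)ᶜ}

variable {m k : ℕ} {S : Fin (k + 1) → Finset (Fin (m + 1))}

lemma rOf_nonneg (x : Fin (m + 1) → ℝ) (s : Finset (Fin (m + 1))) : 0 ≤ rOf m x s :=
  div_nonneg (extr_nonneg x s) (by linarith [extr_nonneg x s])

lemma rOf_lt_one (x : Fin (m + 1) → ℝ) (s : Finset (Fin (m + 1))) : rOf m x s < 1 := by
  rw [rOf]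
  have h := extr_nonneg x s
  rw [div_lt_one (by linarith)]
  linarith

lemma rOf_ne_imp {x : Fin (m + 1) → ℝ} {s : Finset (Fin (m + 1))} (h : rOf m x s ≠ 0) :
    extr x s ≠ 0 := by
  intro h0
  exact h (by rw [rOf, h0, zero_div])

lemma aOf_pos (x : Fin (m + 1) → ℝ) : 0 < aOf m k S x := by
  rw [aOf]
  apply inv_pos.2
  have hsum : 0 ≤ ∑ s ∈ Finset.univ.filter
      (fun s => s ∉ Finset.image S Finset.univ), rOf m x s :=
    Finset.sum_nonneg (fun s _ => rOf_nonneg x s)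
  positivity

section Facts
variable (hne : ∀ j, (S j).Nonempty)
include hne

lemma empty_not_rho : (∅ : Finset (Fin (m + 1))) ∉ Finset.image S Finset.univ := by
  intro h
  obtain ⟨j, -, hj⟩ := Finset.mem_image.1 h
  exact (hne j).ne_empty hj

omit hne in
lemma tval_nonneg (p : Fin (m + 1) → ℝ) (s : Finset (Fin (m + 1))) : 0 ≤ tval m p s :=
  mul_nonneg (Nat.cast_nonneg _) (extr_nonneg p s)

variable {p : Fin (m + 1) → ℝ} (hp : p ∈ Tgeo m k S)
include hp

lemma alpha_pos : 0 < tval m p (S 0) := by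
  have := hp.2.2.2 ∅ (empty_not_rho hne)
  simpa [tval] using this

omit hne in
lemma tval_rho (j : Fin (k + 1)) : tval m p (S j) = tval m p (S 0) := hp.2.2.1 j

omit hne in
lemma tval_lt (s : Finset (Fin (m + 1))) (hs : s ∉ Finset.image S Finset.univ) :
    tval m p s < tval m p (S 0) := hp.2.2.2 s hs

lemma extr_S_ne (j : Fin (k + 1)) : extr p (S j) ≠ 0 := by
  intro h
  have h2 := alpha_pos hne hp
  rw [← tval_rho hp j, tval, h, mul_zero] at h2
  exact lt_irrefl _ h2

omit hne in
lemma sum_tval : ∑ s : Finset (Fin (m + 1)), tval m p s = 1 := by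
  calc ∑ s : Finset (Fin (m + 1)), tval m p s = ∑ i, realize (extr p) i :=
        (sum_realize (extr p)).symm
    _ = ∑ i, p i := by rw [realize_extr hp.1]
    _ = 1 := hp.2.1

omit hne in
lemma uT_nonneg (s : Finset (Fin (m + 1))) : 0 ≤ uT m k S p s := by
  rw [uT]
  split
  · exact le_rfl
  · rename_i hs
    exact div_nonneg (tval_nonneg p s) (sub_nonneg.2 (tval_lt hp s hs).le)

omit hne hp in
lemma uT_ne {s : Finset (Fin (m + 1))} (h : uT m k S p s ≠ 0) :
    extr p s ≠ 0 ∧ s ∉ Finset.image S Finset.univ := by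
  rw [uT] at h
  split at h
  · exact absurd rfl h
  · rename_i hs
    refine ⟨fun h0 => h ?_, hs⟩
    rw [tval, h0, mul_zero, zero_div]

omit hne hp in
lemma uT_chain : IsChain (· ⊆ ·) {s : Finset (Fin (m + 1)) | uT m k S p s ≠ 0} :=
  (extr_support_chain p).mono (fun s hs => (uT_ne hs).1)

lemma Fmap_mem : Fmap m k S p ∈ Xs m k S hne := by
  constructor
  · exact fun i => realize_nonneg (uT_nonneg hp) i
  · intro j
    rw [Fmap, inf'_realize (uT_nonneg hp) uT_chain (hne j),
      maxd_realize (uT_nonneg hp) uT_chain (S j),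
      sum_filter_reduce (uT m k S p) (fun s' => S j ⊆ s') _,
      sum_filter_reduce (uT m k S p) (fun s' => ¬ s' ⊆ S j) _]
    apply Finset.sum_congr _ (fun _ _ => rfl)
    ext s
    constructor
    · intro hmem
      obtain ⟨-, hu, hsub⟩ := Finset.mem_filter.1 hmem
      have hns : ¬ s ⊆ S j := fun hsub' => (uT_ne hu).2
        ((Finset.Subset.antisymm hsub' hsub) ▸ Finset.mem_image_of_mem S (Finset.mem_univ j))
      exact Finset.mem_filter.2 ⟨Finset.mem_univ s, hu, hns⟩
    · intro hmem
      obtain ⟨-, hu, hnsub⟩ := Finset.mem_filter.1 hmem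
      have hne' : s ≠ S j := fun h => hnsub (h ▸ subset_rfl)
      have hsub : S j ⊆ s := by
        rcases extr_support_chain p (uT_ne hu).1 (extr_S_ne hne hp j) hne' with h | h
        · exact absurd h hnsub
        · exact h
      exact Finset.mem_filter.2 ⟨Finset.mem_univ s, hu, hsub⟩

lemma Gmap_of_Fmap (hS : StrictMono S) : Gmap m k S (Fmap m k S p) = p := by
  set x := Fmap m k S p with hx
  have hα0 : tval m p (S 0) ≠ 0 := ne_of_gt (alpha_pos hne hp)
  have hextr_x : ∀ s, extr x s = uT m k S p s := by
    intro s
    rcases s.eq_empty_or_nonempty with rfl | hs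
    · rw [extr_empty, uT, if_neg (empty_not_rho hne), tval]
      simp
    · exact extr_realize (uT_nonneg hp) uT_chain hs
  have hr : ∀ s ∉ Finset.image S Finset.univ,
      rOf m x s = tval m p s / tval m p (S 0) := by
    intro s hs
    rw [rOf, hextr_x s, uT, if_neg hs]
    have hd : (0 : ℝ) < tval m p (S 0) - tval m p s := sub_pos.2 (tval_lt hp s hs)
    have hdne : tval m p (S 0) - tval m p s ≠ 0 := ne_of_gt hd
    have h1 : 1 + tval m p s / (tval m p (S 0) - tval m p s)
        = tval m p (S 0) / (tval m p (S 0) - tval m p s) := by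
      rw [← div_self hdne, ← add_div]
      congr 1
      ring
    rw [h1, div_div_eq_mul_div, div_mul_cancel₀ _ hdne]
  have hrρ : ∀ j, rOf m x (S j) = 0 := by
    intro j
    rw [rOf, hextr_x (S j), uT,
      if_pos (Finset.mem_image_of_mem S (Finset.mem_univ j)), zero_div]
  have hcardρ : ((Finset.image S Finset.univ).card : ℝ) = (k + 1 : ℝ) := by
    rw [Finset.card_image_of_injective _ hS.injective, Finset.card_univ, Fintype.card_fin]
    simp
  have hfilterρ : Finset.univ.filter
      (fun s : Finset (Fin (m + 1)) => s ∈ Finset.image S Finset.univ)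
        = Finset.image S Finset.univ := by
    ext s; simp
  have hsumρ : ∑ s ∈ Finset.image S Finset.univ, tval m p s = (k + 1 : ℝ) * tval m p (S 0) := by
    rw [Finset.sum_image (fun a _ b _ h => hS.injective h)]
    rw [Finset.sum_congr rfl (fun j _ => tval_rho hp j), Finset.sum_const,
      Finset.card_univ, Fintype.card_fin, nsmul_eq_mul]
    simp
  have hsum_split := Finset.sum_filter_add_sum_filter_not Finset.univ
    (fun s : Finset (Fin (m + 1)) => s ∈ Finset.image S Finset.univ) (tval m p)
  rw [sum_tval hp, hfilterρ, hsumρ] at hsum_split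
  have hsum_nr : ∑ s ∈ Finset.univ.filter
      (fun s => s ∉ Finset.image S Finset.univ), tval m p s
        = 1 - (k + 1 : ℝ) * tval m p (S 0) := by linarith
  have haOf : aOf m k S x = tval m p (S 0) := by
    rw [aOf]
    have hsr : ∑ s ∈ Finset.univ.filter
        (fun s => s ∉ Finset.image S Finset.univ), rOf m x s
          = (1 - (k + 1 : ℝ) * tval m p (S 0)) / tval m p (S 0) := by
      rw [Finset.sum_congr rfl (fun s hs => hr s (Finset.mem_filter.1 hs).2),
        ← Finset.sum_div, hsum_nr]
    rw [hsr]
    rw [show (k + 1 : ℝ) + (1 - (k + 1 : ℝ) * tval m p (S 0)) / tval m p (S 0)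
        = (tval m p (S 0))⁻¹ from by field_simp; ring, inv_inv]
  have hhG : ∀ s : Finset (Fin (m + 1)), s.Nonempty → hG m k S x s = extr p s := by
    intro s hs
    have hcard : (s.card : ℝ) ≠ 0 := Nat.cast_ne_zero.2 (Finset.card_ne_zero.2 hs)
    rw [hG]
    by_cases hsρ : s ∈ Finset.image S Finset.univ
    · rw [if_pos hsρ, haOf]
      obtain ⟨j, -, rfl⟩ := Finset.mem_image.1 hsρ
      have hthis := tval_rho hp j
      rw [tval] at hthis
      rw [← hthis, mul_comm, mul_div_assoc, div_self hcard, mul_one]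
    · rw [if_neg hsρ, haOf, hr s hsρ,
        show tval m p (S 0) * (tval m p s / tval m p (S 0)) = tval m p s from by
          rw [mul_comm, div_mul_cancel₀ _ hα0],
        tval, mul_comm, mul_div_assoc, div_self hcard, mul_one]
  have hpre : p = realize (extr p) := (realize_extr hp.1).symm
  rw [Gmap]
  conv_rhs => rw [hpre]
  unfold realize
  funext i
  apply Finset.sum_congr rfl
  intro s _
  by_cases h : i ∈ s
  · rw [if_pos h, if_pos h, hhG s ⟨i, h⟩]
  · rw [if_neg h, if_neg h]

end Facts

section FactsX
variable (hne : ∀ j, (S j).Nonempty) {x : Fin (m + 1) → ℝ} (hx : x ∈ Xs m k S hne)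
include hne hx

lemma extr_x_rho (j : Fin (k + 1)) : extr x (S j) = 0 :=
  extr_of_le (hne j) (le_of_eq (hx.2 j))

lemma extr_x_comp {s : Finset (Fin (m + 1))} (h : extr x s ≠ 0) (j : Fin (k + 1)) :
    S j ⊆ s ∨ s ⊆ S j := by
  by_contra hcon
  push_neg at hcon
  obtain ⟨h1, h2⟩ := hcon
  obtain ⟨i, hiS, his⟩ := Finset.not_subset.1 h1
  obtain ⟨i', hi's, hi'S⟩ := Finset.not_subset.1 h2
  obtain ⟨hsne, hlt⟩ := extr_ne h
  have e1 : x i ≤ maxd x sᶜ := le_maxd x (Finset.mem_compl.2 his)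
  have e2 : s.inf' hsne x ≤ x i' := Finset.inf'_le x hi's
  have e3 : x i' ≤ maxd x (S j)ᶜ := le_maxd x (Finset.mem_compl.2 hi'S)
  have e4 : (S j).inf' (hne j) x ≤ x i := Finset.inf'_le x hiS
  rw [hx.2 j] at e4
  linarith

lemma hG_supp {s : Finset (Fin (m + 1))} (h : hG m k S x s ≠ 0) :
    s ∈ Finset.image S Finset.univ ∨ extr x s ≠ 0 := by
  rw [hG] at h
  split at h
  · rename_i hs; exact Or.inl hs
  · right
    intro h0
    exact h (by rw [rOf, h0, zero_div, mul_zero, zero_div])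

lemma hG_chain (hS : StrictMono S) :
    IsChain (· ⊆ ·) {s : Finset (Fin (m + 1)) | hG m k S x s ≠ 0} := by
  intro s hs s' hs' hnee
  rcases hG_supp hne hx hs with h1 | h1 <;> rcases hG_supp hne hx hs' with h2 | h2
  · obtain ⟨j, -, rfl⟩ := Finset.mem_image.1 h1
    obtain ⟨j', -, rfl⟩ := Finset.mem_image.1 h2
    rcases le_total j j' with h | h
    · exact Or.inl (hS.monotone h)
    · exact Or.inr (hS.monotone h)
  · obtain ⟨j, -, rfl⟩ := Finset.mem_image.1 h1
    rcases extr_x_comp hne hx h2 j with h | h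
    · exact Or.inl h
    · exact Or.inr h
  · obtain ⟨j, -, rfl⟩ := Finset.mem_image.1 h2
    rcases extr_x_comp hne hx h1 j with h | h
    · exact Or.inr h
    · exact Or.inl h
  · exact extr_support_chain x h1 h2 hnee

lemma hG_nonneg (s : Finset (Fin (m + 1))) : 0 ≤ hG m k S x s := by
  rw [hG]
  split
  · exact div_nonneg (aOf_pos x).le (Nat.cast_nonneg _)
  · exact div_nonneg (mul_nonneg (aOf_pos x).le (rOf_nonneg x s)) (Nat.cast_nonneg _)

lemma card_hG (s : Finset (Fin (m + 1))) :
    (s.card : ℝ) * hG m k S x s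
      = if s ∈ Finset.image S Finset.univ then aOf m k S x
        else aOf m k S x * rOf m x s := by
  rcases s.eq_empty_or_nonempty with rfl | hs
  · rw [if_neg (empty_not_rho hne), hG, if_neg (empty_not_rho hne)]
    have h0 : extr x (∅ : Finset (Fin (m + 1))) = 0 := extr_empty x
    rw [rOf, h0]
    simp
  · have hcard : (s.card : ℝ) ≠ 0 := Nat.cast_ne_zero.2 (Finset.card_ne_zero.2 hs)
    rw [hG]
    split <;> field_simp <;> ring

lemma Gmap_mem (hS : StrictMono S) : Gmap m k S x ∈ Tgeo m k S := by
  have hGr : ∀ s : Finset (Fin (m + 1)), s.Nonempty →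
      extr (Gmap m k S x) s = hG m k S x s := fun s hs =>
    extr_realize (hG_nonneg hne hx) (hG_chain hne hx hS) hs
  have htv : ∀ s : Finset (Fin (m + 1)), (s.card : ℝ) * extr (Gmap m k S x) s
      = if s ∈ Finset.image S Finset.univ then aOf m k S x
        else aOf m k S x * rOf m x s := by
    intro s
    rcases s.eq_empty_or_nonempty with rfl | hs
    · rw [if_neg (empty_not_rho hne)]
      have h0 : extr x (∅ : Finset (Fin (m + 1))) = 0 := extr_empty x
      rw [rOf, h0]
      simp
    · rw [hGr s hs, card_hG hne hx s]
  have hS0 : (S 0) ∈ Finset.image S Finset.univ :=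
    Finset.mem_image_of_mem S (Finset.mem_univ 0)
  have hα : ((S 0).card : ℝ) * extr (Gmap m k S x) (S 0) = aOf m k S x := by
    rw [htv (S 0), if_pos hS0]
  refine ⟨fun i => realize_nonneg (hG_nonneg hne hx) i, ?_, ?_, ?_⟩
  · rw [Gmap, sum_realize]
    have : ∀ s : Finset (Fin (m + 1)), (s.card : ℝ) * hG m k S x s
        = if s ∈ Finset.image S Finset.univ then aOf m k S x
          else aOf m k S x * rOf m x s := card_hG hne hx
    rw [Finset.sum_congr rfl (fun s _ => this s), Finset.sum_ite]
    have hfρ : Finset.univ.filter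
        (fun s : Finset (Fin (m + 1)) => s ∈ Finset.image S Finset.univ)
          = Finset.image S Finset.univ := by ext s; simp
    rw [hfρ, Finset.sum_const, Finset.card_image_of_injective _ hS.injective,
      Finset.card_univ, Fintype.card_fin, nsmul_eq_mul, ← Finset.mul_sum]
    have hgoal : ∀ a b : ℝ, 0 < a + b → a * (a + b)⁻¹ + (a + b)⁻¹ * b = 1 := by
      intro a b h
      rw [show a * (a + b)⁻¹ + (a + b)⁻¹ * b = (a + b) * (a + b)⁻¹ from by ring,
        mul_inv_cancel₀ (ne_of_gt h)]
    have hsum : 0 ≤ ∑ s ∈ Finset.univ.filter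
        (fun s => s ∉ Finset.image S Finset.univ), rOf m x s :=
      Finset.sum_nonneg (fun s _ => rOf_nonneg x s)
    rw [Nat.cast_add, Nat.cast_one, aOf]
    exact hgoal _ _ (by positivity)
  · intro j
    rw [hα, htv (S j), if_pos (Finset.mem_image_of_mem S (Finset.mem_univ j))]
  · intro s hsρ
    rw [hα, htv s, if_neg hsρ]
    calc aOf m k S x * rOf m x s < aOf m k S x * 1 :=
          mul_lt_mul_of_pos_left (rOf_lt_one x s) (aOf_pos x)
      _ = aOf m k S x := mul_one _

lemma Fmap_of_Gmap (hS : StrictMono S) : Fmap m k S (Gmap m k S x) = x := by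
  set p := Gmap m k S x with hpdef
  have hGr : ∀ s : Finset (Fin (m + 1)), s.Nonempty →
      extr p s = hG m k S x s := fun s hs =>
    extr_realize (hG_nonneg hne hx) (hG_chain hne hx hS) hs
  have hS0 : (S 0) ∈ Finset.image S Finset.univ :=
    Finset.mem_image_of_mem S (Finset.mem_univ 0)
  have htα : tval m p (S 0) = aOf m k S x := by
    rw [tval, hGr (S 0) (hne 0), card_hG hne hx (S 0), if_pos hS0]
  have htv : ∀ s, tval m p s
      = if s ∈ Finset.image S Finset.univ then aOf m k S x
        else aOf m k S x * rOf m x s := by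
    intro s
    rcases s.eq_empty_or_nonempty with rfl | hs
    · rw [if_neg (empty_not_rho hne), tval]
      have h0 : extr x (∅ : Finset (Fin (m + 1))) = 0 := extr_empty x
      rw [rOf, h0]
      simp
    · rw [tval, hGr s hs, card_hG hne hx s]
  have huT : ∀ s, uT m k S p s = extr x s := by
    intro s
    rw [uT]
    by_cases hsρ : s ∈ Finset.image S Finset.univ
    · rw [if_pos hsρ]
      obtain ⟨j, -, rfl⟩ := Finset.mem_image.1 hsρ
      exact (extr_x_rho hne hx j).symm
    · rw [if_neg hsρ, htv s, if_neg hsρ, htα]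
      have ha := aOf_pos (S := S) x
      have hr1 := rOf_lt_one x s
      have h1p : (0 : ℝ) < 1 + extr x s := by linarith [extr_nonneg x s]
      rw [show aOf m k S x - aOf m k S x * rOf m x s
          = aOf m k S x * (1 - rOf m x s) from by ring]
      rw [div_eq_iff (ne_of_gt (mul_pos ha (by linarith)))]
      rw [rOf]
      field_simp
      ring
  rw [Fmap]
  have : uT m k S p = extr x := funext huT
  rw [this]
  exact realize_extr hx.1

end FactsX

-- continuity
lemma continuous_tval (s : Finset (Fin (m + 1))) :
    Continuous fun p : Fin (m + 1) → ℝ => tval m p s :=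
  continuous_const.mul (continuous_extr s)

lemma continuous_Fmap (hne : ∀ j, (S j).Nonempty) :
    Continuous fun p : (Tgeo m k S) => Fmap m k S p.1 := by
  apply continuous_pi
  intro i
  unfold Fmap realize
  apply continuous_finset_sum
  intro s _
  by_cases h : i ∈ s
  · simp only [if_pos h]
    unfold uT
    by_cases hsρ : s ∈ Finset.image S Finset.univ
    · simp only [if_pos hsρ]
      exact continuous_const
    · simp only [if_neg hsρ]
      apply Continuous.div
      · exact (continuous_tval s).comp continuous_subtype_val
      · exact ((continuous_tval (S 0)).comp continuous_subtype_val).sub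
          ((continuous_tval s).comp continuous_subtype_val)
      · intro q
        exact ne_of_gt (sub_pos.2 (tval_lt q.2 s hsρ))
  · simp only [if_neg h]
    exact continuous_const

lemma continuous_rOf (s : Finset (Fin (m + 1))) :
    Continuous fun x : Fin (m + 1) → ℝ => rOf m x s := by
  unfold rOf
  apply Continuous.div (continuous_extr s) (continuous_const.add (continuous_extr s))
  intro x
  have := extr_nonneg x s
  intro hcon
  simp only [Pi.add_apply] at hcon
  linarith

lemma continuous_aOf : Continuous fun x : Fin (m + 1) → ℝ => aOf m k S x := by
  unfold aOf
  apply Continuous.inv₀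
  · exact continuous_const.add (continuous_finset_sum _ (fun s _ => continuous_rOf s))
  · intro x
    have hsum : 0 ≤ ∑ s ∈ Finset.univ.filter
        (fun s => s ∉ Finset.image S Finset.univ), rOf m x s :=
      Finset.sum_nonneg (fun s _ => rOf_nonneg x s)
    positivity

lemma continuous_Gmap : Continuous fun x : Fin (m + 1) → ℝ => Gmap m k S x := by
  apply continuous_pi
  intro i
  unfold Gmap realize
  apply continuous_finset_sum
  intro s _
  by_cases h : i ∈ s
  · simp only [if_pos h]
    unfold hG
    by_cases hsρ : s ∈ Finset.image S Finset.univ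
    · simp only [if_pos hsρ]
      exact continuous_aOf.div_const _
    · simp only [if_neg hsρ]
      exact (continuous_aOf.mul (continuous_rOf s)).div_const _
  · simp only [if_neg h]
    exact continuous_const

/-- the first homeomorphism: dual cell model to linear model. -/
noncomputable def E2homeo (hS : StrictMono S) (hne : ∀ j, (S j).Nonempty) :
    (Tgeo m k S) ≃ₜ (Xs m k S hne) where
  toFun := fun p => ⟨Fmap m k S p.1, Fmap_mem hne p.2⟩
  invFun := fun x => ⟨Gmap m k S x.1, Gmap_mem hne x.2 hS⟩
  left_inv := fun p => Subtype.ext (Gmap_of_Fmap hne p.2 hS)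
  right_inv := fun x => Subtype.ext (Fmap_of_Gmap hne x.2 hS)
  continuous_toFun := (continuous_Fmap hne).subtype_mk _
  continuous_invFun := (continuous_Gmap.comp continuous_subtype_val).subtype_mk _

end E2sec

section E3sec

lemma sup'_sub_const {ι : Type*} {s : Finset ι} (h : s.Nonempty) (f : ι → ℝ) (c : ℝ) :
    s.sup' h (fun i => f i - c) = s.sup' h f - c := by
  apply le_antisymm
  · exact Finset.sup'_le _ _ (fun i hi => sub_le_sub_right (Finset.le_sup' f hi) c)
  · obtain ⟨i₀, hi₀, he⟩ := Finset.exists_mem_eq_sup' h f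
    rw [he]
    exact Finset.le_sup' (fun i => f i - c) hi₀

lemma inf'_sub_const {ι : Type*} {s : Finset ι} (h : s.Nonempty) (f : ι → ℝ) (c : ℝ) :
    s.inf' h (fun i => f i - c) = s.inf' h f - c := by
  apply le_antisymm
  · obtain ⟨i₀, hi₀, he⟩ := Finset.exists_mem_eq_inf' h f
    rw [he]
    exact Finset.inf'_le (fun i => f i - c) hi₀
  · exact Finset.le_inf' _ _ (fun i hi => sub_le_sub_right (Finset.inf'_le f hi) c)

variable (m k : ℕ) (S : Fin (k + 1) → Finset (Fin (m + 1)))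

/-- the block index of a coordinate: the first face of the chain containing it. -/
noncomputable def blk (i : Fin (m + 1)) : Fin (k + 1) :=
  if h : (Finset.univ.filter (fun j => i ∈ S j)).Nonempty
  then (Finset.univ.filter (fun j => i ∈ S j)).min' h else 0

/-- the block of a given index. -/
noncomputable def Bl (j : Fin (k + 1)) : Finset (Fin (m + 1)) :=
  Finset.univ.filter (fun i => blk m k S i = j)

noncomputable def piv (j : Fin (k + 1)) : Fin (m + 1) :=
  if h : (Bl m k S j).Nonempty then h.choose else ⟨0, Nat.succ_pos m⟩

noncomputable def NPs : Finset (Fin (m + 1)) :=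
  Finset.univ \ Finset.univ.image (piv m k S)

noncomputable def ztil (z : {i // i ∈ NPs m k S} → ℝ) : Fin (m + 1) → ℝ :=
  fun i => if h : i ∈ NPs m k S then z ⟨i, h⟩ else 0

noncomputable def E3fwd (x : Fin (m + 1) → ℝ) : {i // i ∈ NPs m k S} → ℝ :=
  fun a => x a.1 - x (piv m k S (blk m k S a.1))

noncomputable def Mf (z : {i // i ∈ NPs m k S} → ℝ) (l : Fin (k + 1)) : ℝ :=
  if h : (Bl m k S l).Nonempty then (Bl m k S l).sup' h (ztil m k S z) else 0

noncomputable def muf (z : {i // i ∈ NPs m k S} → ℝ) (l : Fin (k + 1)) : ℝ :=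
  if h : (Bl m k S l).Nonempty then (Bl m k S l).inf' h (ztil m k S z) else 0

noncomputable def Pf (z : {i // i ∈ NPs m k S} → ℝ) (j : Fin (k + 1)) : ℝ :=
  (∑ l ∈ Finset.univ.filter (fun l => j < l), Mf m k S z l)
    - (∑ l ∈ Finset.univ.filter (fun l => j ≤ l), muf m k S z l)

noncomputable def Qf (z : {i // i ∈ NPs m k S} → ℝ) (j : Fin (k + 1)) : ℝ :=
  ∑ l ∈ Finset.univ.filter (fun l => j < l), (Mf m k S z l - muf m k S z l)

noncomputable def E3inv (z : {i // i ∈ NPs m k S} → ℝ) : Fin (m + 1) → ℝ :=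
  fun i => ztil m k S z i + Pf m k S z (blk m k S i)

variable {m k S}
variable (hS : StrictMono S) (hne : ∀ j, (S j).Nonempty)
  (htop : S (Fin.last k) = Finset.univ)

section BlkFacts
include htop

lemma blk_filter_ne (i : Fin (m + 1)) :
    (Finset.univ.filter (fun j => i ∈ S j)).Nonempty :=
  ⟨Fin.last k, by simp [htop]⟩

lemma blk_mem_S (i : Fin (m + 1)) : i ∈ S (blk m k S i) := by
  rw [blk, dif_pos (blk_filter_ne htop i)]
  have := (Finset.univ.filter (fun j => i ∈ S j)).min'_mem (blk_filter_ne htop i)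
  exact (Finset.mem_filter.1 this).2

include hS in
lemma mem_S_iff (i : Fin (m + 1)) (j : Fin (k + 1)) :
    i ∈ S j ↔ blk m k S i ≤ j := by
  constructor
  · intro h
    rw [blk, dif_pos (blk_filter_ne htop i)]
    exact Finset.min'_le _ j (Finset.mem_filter.2 ⟨Finset.mem_univ j, h⟩)
  · intro h
    exact hS.monotone h (blk_mem_S htop i)

omit htop in
lemma mem_Bl (i : Fin (m + 1)) (j : Fin (k + 1)) :
    i ∈ Bl m k S j ↔ blk m k S i = j := by
  simp [Bl]

include hS hne in
lemma Bl_nonempty (j : Fin (k + 1)) : (Bl m k S j).Nonempty := by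
  rcases eq_or_ne j 0 with rfl | hj
  · obtain ⟨i, hi⟩ := hne 0
    exact ⟨i, (mem_Bl i 0).2 (le_antisymm ((mem_S_iff hS htop i 0).1 hi) (Fin.zero_le _))⟩
  · have hj1 : 1 ≤ (j : ℕ) := by
      by_contra h
      exact hj (Fin.ext (by simp only [Fin.val_zero]; omega))
    have hjlt : (j : ℕ) - 1 < k + 1 := by omega
    set j' : Fin (k + 1) := ⟨(j : ℕ) - 1, hjlt⟩ with hj'
    have hlt : j' < j := by
      rw [Fin.lt_def]
      simp only [hj']
      omega
    obtain ⟨i, hij, hij'⟩ := Finset.exists_of_ssubset (hS hlt)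
    refine ⟨i, (mem_Bl i j).2 ?_⟩
    have h1 : blk m k S i ≤ j := (mem_S_iff hS htop i j).1 hij
    have h2 : ¬ blk m k S i ≤ j' := fun h => hij' ((mem_S_iff hS htop i j').2 h)
    rw [Fin.le_def] at h1 h2
    have h2' : ¬ (blk m k S i : ℕ) ≤ (j : ℕ) - 1 := h2
    exact Fin.ext (by omega)

include hS hne in
lemma piv_mem (j : Fin (k + 1)) : piv m k S j ∈ Bl m k S j := by
  rw [piv, dif_pos (Bl_nonempty hS hne htop j)]
  exact (Bl_nonempty hS hne htop j).choose_spec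

include hS hne in
lemma blk_piv (j : Fin (k + 1)) : blk m k S (piv m k S j) = j :=
  (mem_Bl _ j).1 (piv_mem hS hne htop j)

include hS hne in
lemma piv_inj : Function.Injective (piv m k S) := fun a b h => by
  rw [← blk_piv hS hne htop a, ← blk_piv hS hne htop b, h]

include hS hne in
lemma piv_not_NPs (j : Fin (k + 1)) : piv m k S j ∉ NPs m k S := by
  rw [NPs, Finset.mem_sdiff]
  push_neg
  intro
  exact Finset.mem_image_of_mem _ (Finset.mem_univ j)

include hS hne in
lemma ztil_piv (z : {i // i ∈ NPs m k S} → ℝ) (j : Fin (k + 1)) :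
    ztil m k S z (piv m k S j) = 0 := dif_neg (piv_not_NPs hS hne htop j)

include hS hne in
lemma NPs_card (hk : k ≤ m) : (NPs m k S).card = m - k := by
  rw [NPs, Finset.card_sdiff_of_subset (Finset.subset_univ _),
    Finset.card_image_of_injective _ (piv_inj hS hne htop), Finset.card_univ,
    Finset.card_univ, Fintype.card_fin, Fintype.card_fin]
  omega

end BlkFacts

lemma filt_le (j : Fin (k + 1)) :
    Finset.univ.filter (fun l => j ≤ l) = insert j (Finset.univ.filter (fun l => j < l)) := by
  ext l
  simp only [Finset.mem_filter, Finset.mem_univ, true_and, Finset.mem_insert]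
  constructor
  · intro h
    rcases eq_or_lt_of_le h with h | h
    · exact Or.inl h.symm
    · exact Or.inr h
  · rintro (rfl | h)
    · exact le_rfl
    · exact h.le

lemma j_notmem_lt (j : Fin (k + 1)) :
    j ∉ Finset.univ.filter (fun l => j < l) := by
  simp

section Jsucc
variable {j : Fin (k + 1)} (hjk : (j : ℕ) < k)

lemma jsucc_iff (l : Fin (k + 1)) :
    j < l ↔ (⟨(j : ℕ) + 1, by omega⟩ : Fin (k + 1)) ≤ l := by
  rw [Fin.lt_def, Fin.le_def]
  simp only
  omega

lemma filt_lt_succ :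
    Finset.univ.filter (fun l => j < l)
      = insert (⟨(j : ℕ) + 1, by omega⟩ : Fin (k + 1))
          (Finset.univ.filter (fun l => (⟨(j : ℕ) + 1, by omega⟩ : Fin (k + 1)) < l)) := by
  have h1 : Finset.univ.filter (fun l => j < l)
      = Finset.univ.filter (fun l => (⟨(j : ℕ) + 1, by omega⟩ : Fin (k + 1)) ≤ l) := by
    ext l
    simp only [Finset.mem_filter, Finset.mem_univ, true_and]
    exact jsucc_iff hjk l
  rw [h1, filt_le]

end Jsucc

lemma Pf_add_muf (z : {i // i ∈ NPs m k S} → ℝ) (j : Fin (k + 1)) :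
    Pf m k S z j + muf m k S z j = Qf m k S z j := by
  rw [Pf, Qf, filt_le j, Finset.sum_insert (j_notmem_lt j), Finset.sum_sub_distrib]
  ring

include hS hne htop in
lemma Mf_sub_muf_nonneg (z : {i // i ∈ NPs m k S} → ℝ) (l : Fin (k + 1)) :
    0 ≤ Mf m k S z l - muf m k S z l := by
  rw [Mf, muf, dif_pos (Bl_nonempty hS hne htop l), dif_pos (Bl_nonempty hS hne htop l)]
  obtain ⟨i₀, hi₀⟩ := Bl_nonempty hS hne htop l
  exact sub_nonneg.2 (le_trans (Finset.inf'_le _ hi₀) (Finset.le_sup' _ hi₀))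

include hS hne htop in
lemma Qf_nonneg (z : {i // i ∈ NPs m k S} → ℝ) (j : Fin (k + 1)) :
    0 ≤ Qf m k S z j :=
  Finset.sum_nonneg (fun l _ => Mf_sub_muf_nonneg hS hne htop z l)

include hS hne htop in
lemma Qf_anti (z : {i // i ∈ NPs m k S} → ℝ) {l j : Fin (k + 1)} (h : l ≤ j) :
    Qf m k S z j ≤ Qf m k S z l := by
  apply Finset.sum_le_sum_of_subset_of_nonneg
  · intro a ha
    simp only [Finset.mem_filter, Finset.mem_univ, true_and] at ha ⊢
    exact lt_of_le_of_lt h ha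
  · exact fun a _ _ => Mf_sub_muf_nonneg hS hne htop z a

lemma Mf_add_Pf (z : {i // i ∈ NPs m k S} → ℝ) (l : Fin (k + 1)) :
    Mf m k S z l + Pf m k S z l
      = ∑ l' ∈ Finset.univ.filter (fun l' => l ≤ l'),
          (Mf m k S z l' - muf m k S z l') := by
  rw [filt_le l, Finset.sum_insert (j_notmem_lt l)]
  have h := Pf_add_muf z l
  rw [Qf] at h
  linarith

include hS hne htop in
lemma E3inv_bounds (z : {i // i ∈ NPs m k S} → ℝ) (i : Fin (m + 1)) :
    muf m k S z (blk m k S i) + Pf m k S z (blk m k S i) ≤ E3inv m k S z i ∧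
      E3inv m k S z i ≤ Mf m k S z (blk m k S i) + Pf m k S z (blk m k S i) := by
  have hmem : i ∈ Bl m k S (blk m k S i) := (mem_Bl i _).2 rfl
  constructor
  · simp only [E3inv]
    have h1 : muf m k S z (blk m k S i) ≤ ztil m k S z i := by
      rw [muf, dif_pos (Bl_nonempty hS hne htop _)]
      exact Finset.inf'_le _ hmem
    linarith
  · simp only [E3inv]
    have h1 : ztil m k S z i ≤ Mf m k S z (blk m k S i) := by
      rw [Mf, dif_pos (Bl_nonempty hS hne htop _)]
      exact Finset.le_sup' _ hmem
    linarith

include hS hne htop in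
lemma E3inv_mem (z : {i // i ∈ NPs m k S} → ℝ) :
    E3inv m k S z ∈ Xs m k S hne := by
  have hlow : ∀ i, Qf m k S z (blk m k S i) ≤ E3inv m k S z i := by
    intro i
    have h1 := (E3inv_bounds hS hne htop z i).1
    have h2 := Pf_add_muf z (blk m k S i)
    linarith
  constructor
  · intro i
    exact le_trans (Qf_nonneg hS hne htop z _) (hlow i)
  · intro j
    have hinf : (S j).inf' (hne j) (E3inv m k S z) = Qf m k S z j := by
      apply le_antisymm
      · obtain ⟨i₀, hi₀, he⟩ := Finset.exists_mem_eq_inf' (Bl_nonempty hS hne htop j)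
          (ztil m k S z)
        have hblk : blk m k S i₀ = j := (mem_Bl i₀ j).1 hi₀
        have hi₀S : i₀ ∈ S j := (mem_S_iff hS htop i₀ j).2 hblk.le
        have hval : E3inv m k S z i₀ = Qf m k S z j := by
          have hz : ztil m k S z i₀ = muf m k S z j := by
            rw [muf, dif_pos (Bl_nonempty hS hne htop j), he]
          have h2 := Pf_add_muf z j
          simp only [E3inv]
          rw [hblk, hz]
          linarith
        rw [← hval]
        exact Finset.inf'_le _ hi₀S
      · apply Finset.le_inf'
        intro i hi
        have hble : blk m k S i ≤ j := (mem_S_iff hS htop i j).1 hi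
        exact le_trans (Qf_anti hS hne htop z hble) (hlow i)
    have hmaxd : maxd (E3inv m k S z) (S j)ᶜ = Qf m k S z j := by
      apply le_antisymm
      · apply maxd_le (Qf_nonneg hS hne htop z j)
        intro i hi
        have hnot : i ∉ S j := Finset.mem_compl.1 hi
        have hgt : j < blk m k S i := by
          by_contra h
          push_neg at h
          exact hnot ((mem_S_iff hS htop i j).2 h)
        calc E3inv m k S z i
            ≤ Mf m k S z (blk m k S i) + Pf m k S z (blk m k S i) :=
              (E3inv_bounds hS hne htop z i).2
          _ = ∑ l' ∈ Finset.univ.filter (fun l' => blk m k S i ≤ l'),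
                (Mf m k S z l' - muf m k S z l') := Mf_add_Pf z _
          _ ≤ Qf m k S z j := by
              apply Finset.sum_le_sum_of_subset_of_nonneg
              · intro a ha
                simp only [Finset.mem_filter, Finset.mem_univ, true_and] at ha ⊢
                exact lt_of_lt_of_le hgt ha
              · exact fun a _ _ => Mf_sub_muf_nonneg hS hne htop z a
      · by_cases hjk : (j : ℕ) < k
        · obtain ⟨i₀, hi₀, he⟩ := Finset.exists_mem_eq_sup'
            (Bl_nonempty hS hne htop (⟨(j : ℕ) + 1, by omega⟩ : Fin (k + 1)))
            (ztil m k S z)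
          have hblk : blk m k S i₀ = (⟨(j : ℕ) + 1, by omega⟩ : Fin (k + 1)) :=
            (mem_Bl i₀ _).1 hi₀
          have hi₀notS : i₀ ∉ S j := by
            intro hmem
            have hle := (mem_S_iff hS htop i₀ j).1 hmem
            rw [hblk, Fin.le_def] at hle
            simp only at hle
            omega
          have hval : E3inv m k S z i₀ = Qf m k S z j := by
            have hz : ztil m k S z i₀
                = Mf m k S z (⟨(j : ℕ) + 1, by omega⟩ : Fin (k + 1)) := by
              rw [Mf, dif_pos (Bl_nonempty hS hne htop _), he]
            simp only [E3inv]
            rw [hblk, hz, Mf_add_Pf z _, Qf]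
            apply Finset.sum_congr _ (fun _ _ => rfl)
            ext l
            simp only [Finset.mem_filter, Finset.mem_univ, true_and]
            exact (jsucc_iff hjk l).symm
          rw [← hval]
          exact le_maxd _ (Finset.mem_compl.2 hi₀notS)
        · have hQ0 : Qf m k S z j = 0 := by
            have hfe : Finset.univ.filter (fun l => j < l) = ∅ := by
              rw [Finset.filter_eq_empty_iff]
              intro l _
              rw [Fin.lt_def]
              have := l.isLt
              omega
            rw [Qf, hfe, Finset.sum_empty]
          rw [hQ0]
          exact maxd_nonneg _ _
    rw [hinf, hmaxd]

-- the blockwise structure of a point of `Xs`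
include hS hne htop in
lemma X1 {x : Fin (m + 1) → ℝ} (hx : x ∈ Xs m k S hne) (j : Fin (k + 1)) :
    (S j).inf' (hne j) x = (Bl m k S j).inf' (Bl_nonempty hS hne htop j) x := by
  obtain ⟨i₂, hi₂, he₂⟩ := Finset.exists_mem_eq_inf' (Bl_nonempty hS hne htop j) x
  have hi₂blk : blk m k S i₂ = j := (mem_Bl i₂ j).1 hi₂
  have hi₂S : i₂ ∈ S j := (mem_S_iff hS htop i₂ j).2 hi₂blk.le
  apply le_antisymm
  · rw [he₂]
    exact Finset.inf'_le x hi₂S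
  · apply Finset.le_inf'
    intro i hi
    have hble : blk m k S i ≤ j := (mem_S_iff hS htop i j).1 hi
    rcases eq_or_lt_of_le hble with heq | hlt
    · exact Finset.inf'_le x ((mem_Bl i j).2 heq)
    · have h1 : (S (blk m k S i)).inf' (hne _) x ≤ x i :=
        Finset.inf'_le x (blk_mem_S htop i)
      have h2 : (Bl m k S j).inf' (Bl_nonempty hS hne htop j) x
          ≤ maxd x (S (blk m k S i))ᶜ := by
        rw [he₂]
        apply le_maxd
        apply Finset.mem_compl.2
        intro hmem
        have hle := (mem_S_iff hS htop i₂ _).1 hmem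
        rw [hi₂blk] at hle
        exact absurd hle (not_le.2 hlt)
      rw [← hx.2 (blk m k S i)] at h2
      linarith

include hS hne htop in
lemma X2 {x : Fin (m + 1) → ℝ} (hx : x ∈ Xs m k S hne) {j : Fin (k + 1)}
    (hjk : (j : ℕ) < k) :
    maxd x (S j)ᶜ = (Bl m k S (⟨(j : ℕ) + 1, by omega⟩ : Fin (k + 1))).sup'
      (Bl_nonempty hS hne htop _) x := by
  apply le_antisymm
  · apply maxd_le
    · calc (0 : ℝ) ≤ x (piv m k S ⟨(j : ℕ) + 1, by omega⟩) := hx.1 _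
        _ ≤ _ := Finset.le_sup' x (piv_mem hS hne htop _)
    · intro i hi
      have hnot : i ∉ S j := Finset.mem_compl.1 hi
      have hgt : j < blk m k S i := by
        by_contra h
        push_neg at h
        exact hnot ((mem_S_iff hS htop i j).2 h)
      have hjsle : (⟨(j : ℕ) + 1, by omega⟩ : Fin (k + 1)) ≤ blk m k S i :=
        (jsucc_iff hjk _).1 hgt
      rcases eq_or_lt_of_le hjsle with heq | hlt
      · exact Finset.le_sup' x ((mem_Bl i _).2 heq.symm)
      · have hbpos : 1 ≤ (blk m k S i : ℕ) := by
          rw [Fin.lt_def] at hlt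
          simp only at hlt
          omega
        have hl'lt : (blk m k S i : ℕ) - 1 < k + 1 := by
          have := (blk m k S i).isLt
          omega
        set l' : Fin (k + 1) := ⟨(blk m k S i : ℕ) - 1, hl'lt⟩ with hl'
        have hll' : l' < blk m k S i := by
          rw [Fin.lt_def]
          simp only [hl']
          omega
        have hjsl' : (⟨(j : ℕ) + 1, by omega⟩ : Fin (k + 1)) ≤ l' := by
          rw [Fin.lt_def] at hlt
          rw [Fin.le_def]
          simp only [hl'] at *
          omega
        have hinot : i ∉ S l' := by
          intro hmem
          exact absurd ((mem_S_iff hS htop i l').1 hmem) (not_le.2 hll')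
        have h1 : x i ≤ maxd x (S l')ᶜ := le_maxd x (Finset.mem_compl.2 hinot)
        rw [← hx.2 l'] at h1
        have h2 : (S l').inf' (hne l') x ≤ x (piv m k S ⟨(j : ℕ) + 1, by omega⟩) := by
          apply Finset.inf'_le
          apply (mem_S_iff hS htop _ l').2
          rw [blk_piv hS hne htop]
          exact hjsl'
        have h3 := Finset.le_sup' x (piv_mem hS hne htop
          (⟨(j : ℕ) + 1, by omega⟩ : Fin (k + 1)))
        calc x i ≤ (S l').inf' (hne l') x := h1
          _ ≤ x (piv m k S ⟨(j : ℕ) + 1, by omega⟩) := h2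
          _ ≤ _ := h3
  · obtain ⟨i₀, hi₀, he⟩ := Finset.exists_mem_eq_sup'
      (Bl_nonempty hS hne htop (⟨(j : ℕ) + 1, by omega⟩ : Fin (k + 1))) x
    rw [he]
    apply le_maxd
    apply Finset.mem_compl.2
    intro hmem
    have hle := (mem_S_iff hS htop i₀ j).1 hmem
    rw [(mem_Bl i₀ _).1 hi₀, Fin.le_def] at hle
    simp only at hle
    omega

include hS hne htop in
lemma X3 {x : Fin (m + 1) → ℝ} (hx : x ∈ Xs m k S hne) :
    (Bl m k S (Fin.last k)).inf' (Bl_nonempty hS hne htop _) x = 0 := by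
  rw [← X1 hS hne htop hx (Fin.last k), hx.2 (Fin.last k)]
  have hc : (S (Fin.last k))ᶜ = (∅ : Finset (Fin (m + 1))) := by
    rw [htop, Finset.compl_univ]
  rw [hc]
  rfl

include hS hne htop in
lemma X4 {x : Fin (m + 1) → ℝ} (hx : x ∈ Xs m k S hne) {j : Fin (k + 1)}
    (hjk : (j : ℕ) < k) :
    (Bl m k S (⟨(j : ℕ) + 1, by omega⟩ : Fin (k + 1))).sup'
        (Bl_nonempty hS hne htop _) x
      = (Bl m k S j).inf' (Bl_nonempty hS hne htop j) x := by
  rw [← X2 hS hne htop hx hjk, ← X1 hS hne htop hx j, hx.2 j]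

include hS hne htop in
lemma hz_eq (x : Fin (m + 1) → ℝ) (i : Fin (m + 1)) :
    ztil m k S (E3fwd m k S x) i = x i - x (piv m k S (blk m k S i)) := by
  by_cases h : i ∈ NPs m k S
  · exact dif_pos h
  · have hpv : ∃ j, piv m k S j = i := by
      rw [NPs, Finset.mem_sdiff] at h
      push_neg at h
      obtain ⟨j, -, hj⟩ := Finset.mem_image.1 (h (Finset.mem_univ i))
      exact ⟨j, hj⟩
    obtain ⟨j, rfl⟩ := hpv
    rw [show ztil m k S (E3fwd m k S x) (piv m k S j) = 0 from dif_neg h,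
      blk_piv hS hne htop j, sub_self]

include hS hne htop in
lemma Mf_fwd (x : Fin (m + 1) → ℝ) (l : Fin (k + 1)) :
    Mf m k S (E3fwd m k S x) l
      = (Bl m k S l).sup' (Bl_nonempty hS hne htop l) x - x (piv m k S l) := by
  rw [Mf, dif_pos (Bl_nonempty hS hne htop l)]
  rw [show (Bl m k S l).sup' (Bl_nonempty hS hne htop l) (ztil m k S (E3fwd m k S x))
      = (Bl m k S l).sup' (Bl_nonempty hS hne htop l)
          (fun i => x i - x (piv m k S l)) from by
    apply Finset.sup'_congr _ rfl
    intro i hi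
    rw [hz_eq hS hne htop x i, (mem_Bl i l).1 hi]]
  exact sup'_sub_const _ x _

include hS hne htop in
lemma muf_fwd (x : Fin (m + 1) → ℝ) (l : Fin (k + 1)) :
    muf m k S (E3fwd m k S x) l
      = (Bl m k S l).inf' (Bl_nonempty hS hne htop l) x - x (piv m k S l) := by
  rw [muf, dif_pos (Bl_nonempty hS hne htop l)]
  rw [show (Bl m k S l).inf' (Bl_nonempty hS hne htop l) (ztil m k S (E3fwd m k S x))
      = (Bl m k S l).inf' (Bl_nonempty hS hne htop l)
          (fun i => x i - x (piv m k S l)) from by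
    apply Finset.inf'_congr _ rfl
    intro i hi
    rw [hz_eq hS hne htop x i, (mem_Bl i l).1 hi]]
  exact inf'_sub_const _ x _

include hS hne htop in
lemma Pf_fwd {x : Fin (m + 1) → ℝ} (hx : x ∈ Xs m k S hne) (j : Fin (k + 1)) :
    Pf m k S (E3fwd m k S x) j = x (piv m k S j) := by
  have hbase : ∀ j' : Fin (k + 1), j' = Fin.last k →
      Pf m k S (E3fwd m k S x) j' = x (piv m k S j') := by
    rintro j' rfl
    rw [Pf]
    have h1 : Finset.univ.filter (fun l => Fin.last k < l) = ∅ := by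
      rw [Finset.filter_eq_empty_iff]
      intro l _
      exact not_lt.2 (Fin.le_last l)
    have h2 : Finset.univ.filter (fun l => Fin.last k ≤ l) = {Fin.last k} := by
      ext l
      simp only [Finset.mem_filter, Finset.mem_univ, true_and, Finset.mem_singleton]
      constructor
      · intro h
        exact le_antisymm (Fin.le_last l) h
      · rintro rfl
        exact le_rfl
    rw [h1, h2, Finset.sum_empty, Finset.sum_singleton,
      muf_fwd hS hne htop x (Fin.last k), X3 hS hne htop hx]
    ring
  suffices H : ∀ (d : ℕ) (j' : Fin (k + 1)), k - (j' : ℕ) ≤ d →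
      Pf m k S (E3fwd m k S x) j' = x (piv m k S j') by
    exact H k j (by omega)
  intro d
  induction d with
  | zero =>
    intro j' hj'
    exact hbase j' (Fin.ext (by
      have := j'.isLt
      simp only [Fin.val_last]
      omega))
  | succ d ih =>
    intro j' hj'
    by_cases hjk : (j' : ℕ) < k
    · have hih : Pf m k S (E3fwd m k S x) ⟨(j' : ℕ) + 1, by omega⟩
          = x (piv m k S ⟨(j' : ℕ) + 1, by omega⟩) := ih _ (by simp only; omega)
      have hA : ∑ l ∈ Finset.univ.filter (fun l => j' < l), Mf m k S (E3fwd m k S x) l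
          = Mf m k S (E3fwd m k S x) ⟨(j' : ℕ) + 1, by omega⟩
            + ∑ l ∈ Finset.univ.filter
                (fun l => (⟨(j' : ℕ) + 1, by omega⟩ : Fin (k + 1)) < l),
                Mf m k S (E3fwd m k S x) l := by
        rw [filt_lt_succ hjk, Finset.sum_insert (j_notmem_lt _)]
      have hB : ∑ l ∈ Finset.univ.filter (fun l => j' ≤ l), muf m k S (E3fwd m k S x) l
          = muf m k S (E3fwd m k S x) j'
            + ∑ l ∈ Finset.univ.filter (fun l => j' < l),
                muf m k S (E3fwd m k S x) l := by
        rw [filt_le j', Finset.sum_insert (j_notmem_lt _)]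
      have hC : ∑ l ∈ Finset.univ.filter (fun l => j' < l), muf m k S (E3fwd m k S x) l
          = muf m k S (E3fwd m k S x) ⟨(j' : ℕ) + 1, by omega⟩
            + ∑ l ∈ Finset.univ.filter
                (fun l => (⟨(j' : ℕ) + 1, by omega⟩ : Fin (k + 1)) < l),
                muf m k S (E3fwd m k S x) l := by
        rw [filt_lt_succ hjk, Finset.sum_insert (j_notmem_lt _)]
      have hD : ∑ l ∈ Finset.univ.filter
            (fun l => (⟨(j' : ℕ) + 1, by omega⟩ : Fin (k + 1)) ≤ l),
            muf m k S (E3fwd m k S x) l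
          = muf m k S (E3fwd m k S x) ⟨(j' : ℕ) + 1, by omega⟩
            + ∑ l ∈ Finset.univ.filter
                (fun l => (⟨(j' : ℕ) + 1, by omega⟩ : Fin (k + 1)) < l),
                muf m k S (E3fwd m k S x) l := by
        rw [filt_le, Finset.sum_insert (j_notmem_lt _)]
      have e5 : Pf m k S (E3fwd m k S x) j'
          = Pf m k S (E3fwd m k S x) ⟨(j' : ℕ) + 1, by omega⟩
            + Mf m k S (E3fwd m k S x) ⟨(j' : ℕ) + 1, by omega⟩
            - muf m k S (E3fwd m k S x) j' := by
        rw [Pf, Pf, hA, hB, hC, hD]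
        ring
      have e2 := Mf_fwd hS hne htop x (⟨(j' : ℕ) + 1, by omega⟩ : Fin (k + 1))
      have e3 := muf_fwd hS hne htop x j'
      have e4 := X4 hS hne htop hx hjk
      rw [e5, hih, e2, e3, e4]
      ring
    · exact hbase j' (Fin.ext (by
        have := j'.isLt
        simp only [Fin.val_last]
        omega))

include hS hne htop in
lemma E3inv_of_fwd {x : Fin (m + 1) → ℝ} (hx : x ∈ Xs m k S hne) :
    E3inv m k S (E3fwd m k S x) = x := by
  funext i
  simp only [E3inv]
  rw [hz_eq hS hne htop x i, Pf_fwd hS hne htop hx]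
  ring

include hS hne htop in
lemma E3fwd_of_inv (z : {i // i ∈ NPs m k S} → ℝ) :
    E3fwd m k S (E3inv m k S z) = z := by
  funext a
  simp only [E3fwd, E3inv]
  rw [blk_piv hS hne htop, ztil_piv hS hne htop]
  have h1 : ztil m k S z a.1 = z a := dif_pos a.2
  rw [h1]
  ring

-- continuity
lemma continuous_ztil : Continuous (ztil m k S) := by
  apply continuous_pi
  intro i
  by_cases h : i ∈ NPs m k S
  · have : (fun z : {i // i ∈ NPs m k S} → ℝ => ztil m k S z i)
        = fun z => z ⟨i, h⟩ := by
      funext z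
      exact dif_pos h
    rw [this]
    exact continuous_apply _
  · have : (fun z : {i // i ∈ NPs m k S} → ℝ => ztil m k S z i)
        = fun _ => 0 := by
      funext z
      exact dif_neg h
    rw [this]
    exact continuous_const

lemma continuous_Mf (l : Fin (k + 1)) :
    Continuous fun z : {i // i ∈ NPs m k S} → ℝ => Mf m k S z l := by
  by_cases h : (Bl m k S l).Nonempty
  · have : (fun z : {i // i ∈ NPs m k S} → ℝ => Mf m k S z l)
        = fun z => (Bl m k S l).sup' h (ztil m k S z) := by
      funext z
      exact dif_pos h
    rw [this]
    exact (continuous_sup' h).comp continuous_ztil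
  · have : (fun z : {i // i ∈ NPs m k S} → ℝ => Mf m k S z l) = fun _ => 0 := by
      funext z
      exact dif_neg h
    rw [this]
    exact continuous_const

lemma continuous_muf (l : Fin (k + 1)) :
    Continuous fun z : {i // i ∈ NPs m k S} → ℝ => muf m k S z l := by
  by_cases h : (Bl m k S l).Nonempty
  · have : (fun z : {i // i ∈ NPs m k S} → ℝ => muf m k S z l)
        = fun z => (Bl m k S l).inf' h (ztil m k S z) := by
      funext z
      exact dif_pos h
    rw [this]
    exact (continuous_inf' h).comp continuous_ztil
  · have : (fun z : {i // i ∈ NPs m k S} → ℝ => muf m k S z l) = fun _ => 0 := by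
      funext z
      exact dif_neg h
    rw [this]
    exact continuous_const

lemma continuous_E3inv : Continuous (E3inv m k S) := by
  apply continuous_pi
  intro i
  simp only [E3inv]
  apply Continuous.add
  · exact (continuous_apply i).comp continuous_ztil
  · unfold Pf
    exact (continuous_finset_sum _ (fun l _ => continuous_Mf l)).sub
      (continuous_finset_sum _ (fun l _ => continuous_muf l))

/-- the homeomorphism from the linear model to a Euclidean space. -/
noncomputable def E3homeo : (Xs m k S hne) ≃ₜ ({i // i ∈ NPs m k S} → ℝ) where
  toFun := fun x => E3fwd m k S x.1
  invFun := fun z => ⟨E3inv m k S z, E3inv_mem hS hne htop z⟩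
  left_inv := fun x => Subtype.ext (E3inv_of_fwd hS hne htop x.2)
  right_inv := fun z => E3fwd_of_inv hS hne htop z
  continuous_toFun := by
    apply continuous_pi
    intro a
    exact ((continuous_apply a.1).comp continuous_subtype_val).sub
      ((continuous_apply _).comp continuous_subtype_val)
  continuous_invFun := continuous_E3inv.subtype_mk _

end E3sec

section E5sec

noncomputable def zb (l : ℕ) (z : Fin l → ℝ) : Fin (l + 1) → ℝ :=
  fun i => if h : (i : ℕ) < l then z ⟨i, h⟩ else 0

noncomputable def smFun (l : ℕ) (z : Fin l → ℝ) : Fin (l + 1) → ℝ :=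
  fun i => Real.exp (zb l z i) / ∑ j, Real.exp (zb l z j)

noncomputable def ismFun (l : ℕ) (x : Fin (l + 1) → ℝ) : Fin l → ℝ :=
  fun a => Real.log (x a.castSucc) - Real.log (x (Fin.last l))

lemma sm_denom_pos (l : ℕ) (z : Fin l → ℝ) : 0 < ∑ j, Real.exp (zb l z j) :=
  Finset.sum_pos (fun j _ => Real.exp_pos _) ⟨Fin.last l, Finset.mem_univ _⟩

lemma smFun_mem (l : ℕ) (z : Fin l → ℝ) : smFun l z ∈ openStdSimplex l := by
  constructor
  · intro i
    exact div_pos (Real.exp_pos _) (sm_denom_pos l z)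
  · rw [show ∑ i, smFun l z i
        = (∑ i, Real.exp (zb l z i)) / ∑ j, Real.exp (zb l z j) from by
      rw [Finset.sum_div]; rfl]
    exact div_self (ne_of_gt (sm_denom_pos l z))

lemma zb_last (l : ℕ) (z : Fin l → ℝ) : zb l z (Fin.last l) = 0 :=
  dif_neg (by simp [Fin.val_last])

lemma zb_castSucc (l : ℕ) (z : Fin l → ℝ) (a : Fin l) : zb l z a.castSucc = z a := by
  have hlt : ((a.castSucc : Fin (l + 1)) : ℕ) < l := by
    simp only [Fin.coe_castSucc]
    exact a.isLt
  rw [show zb l z a.castSucc = z ⟨((a.castSucc : Fin (l + 1)) : ℕ), hlt⟩ from dif_pos hlt]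
  congr 1

lemma ism_sm (l : ℕ) (z : Fin l → ℝ) : ismFun l (smFun l z) = z := by
  funext a
  have hD := sm_denom_pos l z
  show Real.log (smFun l z a.castSucc) - Real.log (smFun l z (Fin.last l)) = z a
  simp only [smFun]
  rw [Real.log_div (ne_of_gt (Real.exp_pos _)) (ne_of_gt hD),
    Real.log_div (ne_of_gt (Real.exp_pos _)) (ne_of_gt hD),
    Real.log_exp, Real.log_exp, zb_last, zb_castSucc]
  ring

lemma sm_ism {l : ℕ} {x : Fin (l + 1) → ℝ} (hx : x ∈ openStdSimplex l) :
    smFun l (ismFun l x) = x := by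
  obtain ⟨hpos, hsum⟩ := hx
  have hlast := hpos (Fin.last l)
  have hexp : ∀ i : Fin (l + 1),
      Real.exp (zb l (ismFun l x) i) = x i / x (Fin.last l) := by
    intro i
    by_cases h : (i : ℕ) < l
    · rw [show zb l (ismFun l x) i = ismFun l x ⟨(i : ℕ), h⟩ from dif_pos h]
      show Real.exp (Real.log (x ((⟨(i : ℕ), h⟩ : Fin l).castSucc))
        - Real.log (x (Fin.last l))) = x i / x (Fin.last l)
      rw [Real.exp_sub, Real.exp_log (hpos _), Real.exp_log hlast]
      congr 2
    · have hi : i = Fin.last l := Fin.ext (by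
        have := i.isLt
        simp only [Fin.val_last]
        omega)
      rw [show zb l (ismFun l x) i = 0 from dif_neg h, hi, Real.exp_zero,
        eq_comm, div_eq_one_iff_eq (ne_of_gt hlast)]
  funext i
  show Real.exp (zb l (ismFun l x) i) / ∑ j, Real.exp (zb l (ismFun l x) j) = x i
  rw [hexp i, Finset.sum_congr rfl (fun j _ => hexp j), ← Finset.sum_div, hsum]
  field_simp

lemma continuous_zb (l : ℕ) (i : Fin (l + 1)) :
    Continuous fun z : Fin l → ℝ => zb l z i := by
  by_cases h : (i : ℕ) < l
  · have heq : (fun z : Fin l → ℝ => zb l z i) = fun z => z ⟨(i : ℕ), h⟩ := by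
      funext z
      exact dif_pos h
    rw [heq]
    exact continuous_apply _
  · have heq : (fun z : Fin l → ℝ => zb l z i) = fun _ => 0 := by
      funext z
      exact dif_neg h
    rw [heq]
    exact continuous_const

/-- the softmax homeomorphism onto the open standard simplex. -/
noncomputable def E5homeo (l : ℕ) : (Fin l → ℝ) ≃ₜ (openStdSimplex l) where
  toFun := fun z => ⟨smFun l z, smFun_mem l z⟩
  invFun := fun x => ismFun l x.1
  left_inv := fun z => ism_sm l z
  right_inv := fun x => Subtype.ext (sm_ism x.2)
  continuous_toFun := by
    apply Continuous.subtype_mk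
    apply continuous_pi
    intro i
    apply Continuous.div
    · exact Real.continuous_exp.comp (continuous_zb l i)
    · exact continuous_finset_sum _
        (fun j _ => Real.continuous_exp.comp (continuous_zb l j))
    · exact fun z => ne_of_gt (sm_denom_pos l z)
  continuous_invFun := by
    apply continuous_pi
    intro a
    apply Continuous.sub
    · exact Continuous.log ((continuous_apply _).comp continuous_subtype_val)
        (fun x => ne_of_gt (x.2.1 _))
    · exact Continuous.log ((continuous_apply _).comp continuous_subtype_val)
        (fun x => ne_of_gt (x.2.1 _))

end E5sec


/-- for a chain `τ₀ < … < τ_k` of faces of the `m`-simplex `τ_k` (the top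
face), the open dual cell `D̊(τ̂₀…τ̂ₖ, Sd τ_k)` is (PL-)homeomorphic to the open simplex
`Δ̊^{m−k}` of dimension `m − k`. -/
theorem stmt19 (m k : ℕ) (hk : k ≤ m)
    (S : Fin (k + 1) → Finset (Fin (m + 1))) (hS : StrictMono S)
    (hne : ∀ j, (S j).Nonempty) (htop : S (Fin.last k) = Finset.univ) :
    Nonempty ((openDualCell m (Finset.image S Finset.univ)) ≃ₜ
      (openStdSimplex (m - k))) := by
  have hset := openDualCell_eq_Tgeo (S := S) hne
  have hcard := NPs_card hS hne htop hk
  exact ⟨(Homeomorph.setCongr hset).trans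
    ((E2homeo hS hne).trans
      ((E3homeo hS hne htop).trans
        ((Homeomorph.piCongrLeft (Y := fun _ => ℝ)
            (Finset.equivFinOfCardEq hcard)).trans
          (E5homeo (m - k)))))⟩
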